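/- arXiv:2310.10616 — 4 statements merged into one kernel-verified Lean document; each statement's English description precedes it below -/
import Mathlib

section
/- For any d, N ≥ 1 and any D_hid ≥ d + 9, there exists a masked attention layer with a single head, parameterized by matrices Q, K, V ∈ ℝ^{D_hid×D_hid}, such that for every input H ∈ ℝ^{D_hid×2N} of the supervised input format, the output Attn(H) has column 2i−1 equal to [x_i; 0; p^x_i] and column 2i equal to [x_i; y_i; p^y_i] for all i ∈ [N]; that is, the layer copies each x_i into the first d coordinates of the succeeding y-token and leaves all other entries unchanged. -/
open scoped BigOperators Matrix

noncomputable section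

/-- The ReLU activation. -/
def relu (t : ℝ) : ℝ := max t 0

/-- Entrywise ReLU on vectors. -/
def reluV {n : ℕ} (v : Fin n → ℝ) : Fin n → ℝ := fun i => relu (v i)

/-- Leaky ReLU with slope `ρ`. -/
def lrelu (ρ t : ℝ) : ℝ := max t (ρ * t)

/-- Entrywise leaky ReLU. -/
def lreluV (ρ : ℝ) {n : ℕ} (v : Fin n → ℝ) : Fin n → ℝ := fun i => lrelu ρ (v i)

/-- Euclidean (ℓ2) norm of a vector in `ℝ^n`. -/
def l2norm {n : ℕ} (v : Fin n → ℝ) : ℝ := Real.sqrt (∑ i, (v i) ^ 2)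

/-- An attention head: (query, key, value) matrices. -/
structure AttnHead (Dhid : ℕ) where
  Q : Matrix (Fin Dhid) (Fin Dhid) ℝ
  K : Matrix (Fin Dhid) (Fin Dhid) ℝ
  V : Matrix (Fin Dhid) (Fin Dhid) ℝ

/-- Masked attention layer with the normalized-ReLU activation.  Tokens are the
columns `H i`, indexed 0-based (math index `i+1`), so the normalization is
`1/(i+1)` and keys range over `j ≤ i`. -/
def attnLayer {Dhid Mh : ℕ} (heads : Fin Mh → AttnHead Dhid) {M : ℕ}
    (H : Fin M → Fin Dhid → ℝ) : Fin M → Fin Dhid → ℝ := fun i =>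
  H i + ∑ m : Fin Mh, (1 / (((i : ℕ) : ℝ) + 1)) •
    ∑ j ∈ Finset.Iic i,
      relu (((heads m).Q *ᵥ H i) ⬝ᵥ ((heads m).K *ᵥ H j)) • ((heads m).V *ᵥ H j)

/-- MLP layer with residual connection. -/
def mlpLayer {Dhid : ℕ} (W1 W2 : Matrix (Fin Dhid) (Fin Dhid) ℝ) {M : ℕ}
    (H : Fin M → Fin Dhid → ℝ) : Fin M → Fin Dhid → ℝ := fun i =>
  H i + W2 *ᵥ reluV (W1 *ᵥ H i)

/-- One transformer block: a masked attention layer followed by an MLP layer. -/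
structure TFLayer (Dhid : ℕ) where
  Mh : ℕ
  heads : Fin Mh → AttnHead Dhid
  W1 : Matrix (Fin Dhid) (Fin Dhid) ℝ
  W2 : Matrix (Fin Dhid) (Fin Dhid) ℝ

/-- Apply one transformer block. -/
def TFLayer.apply {Dhid : ℕ} (l : TFLayer Dhid) {M : ℕ}
    (H : Fin M → Fin Dhid → ℝ) : Fin M → Fin Dhid → ℝ :=
  mlpLayer l.W1 l.W2 (attnLayer l.heads H)

/-- A decoder transformer: the composition of its blocks. -/
def tfApply {Dhid : ℕ} (layers : List (TFLayer Dhid)) {M : ℕ}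
    (H : Fin M → Fin Dhid → ℝ) : Fin M → Fin Dhid → ℝ :=
  layers.foldl (fun G l => TFLayer.apply l G) H

/-- The vector in `ℝ^Dhid` whose last `m` coordinates are given by `a` and whose
remaining coordinates vanish (zero padding). -/
def tailVec (Dhid : ℕ) {m : ℕ} (a : Fin m → ℝ) : Fin Dhid → ℝ := fun r =>
  if _ : Dhid ≤ (r : ℕ) + m then
    if h2 : (r : ℕ) + m - Dhid < m then a ⟨(r : ℕ) + m - Dhid, h2⟩ else 0
  else 0

/-- The positional encoding `p^x_i` (1-based math index `i`):
zero padding followed by `[1; 2i-1; (2i-1)²; (2i-1)³; i; i²; 1; i]`. -/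
def posXvec (Dhid : ℕ) (i : ℕ) : Fin Dhid → ℝ :=
  tailVec Dhid
    ![1, 2*(i:ℝ)-1, (2*(i:ℝ)-1)^2, (2*(i:ℝ)-1)^3, (i:ℝ), (i:ℝ)^2, 1, (i:ℝ)]

/-- The positional encoding `p^y_i`:
zero padding followed by `[1; 2i; (2i)²; (2i)³; i; i²; 0; 0]`. -/
def posYvec (Dhid : ℕ) (i : ℕ) : Fin Dhid → ℝ :=
  tailVec Dhid ![1, 2*(i:ℝ), (2*(i:ℝ))^2, (2*(i:ℝ))^3, (i:ℝ), (i:ℝ)^2, 0, 0]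

/-- Supervised token format with value block of width `D`: for 0-based example
index `i = t/2`, the x-token (even `t`) is `[zx i; 0; p^x_{i+1}]` and the
y-token (odd `t`) is `[zy i; y i; p^y_{i+1}]`. -/
def supFormat (Dhid D N : ℕ) (zx zy : ℕ → Fin D → ℝ) (y : ℕ → ℝ) :
    Fin (2*N) → Fin Dhid → ℝ := fun t r =>
  if h : (r : ℕ) < D then
    (if (t : ℕ) % 2 = 0 then zx ((t : ℕ)/2) ⟨(r : ℕ), h⟩ else zy ((t : ℕ)/2) ⟨(r : ℕ), h⟩)
  else if (r : ℕ) = D then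
    (if (t : ℕ) % 2 = 0 then 0 else y ((t : ℕ)/2))
  else if (t : ℕ) % 2 = 0 then posXvec Dhid ((t : ℕ)/2 + 1) r
  else posYvec Dhid ((t : ℕ)/2 + 1) r

/-- The supervised input format: `h_{2i-1} = [x_i; 0; p^x_i]`,
`h_{2i} = [0_d; y_i; p^y_i]`. -/
def supInput (Dhid d N : ℕ) (x : ℕ → Fin d → ℝ) (y : ℕ → ℝ) :
    Fin (2*N) → Fin Dhid → ℝ :=
  supFormat Dhid d N x (fun _ _ => 0) y

/-- The `(Bs.length + 1)`-layer leaky-ReLU MLP representation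
`Φ(v) = σ_ρ(B_L ⋯ σ_ρ(B_1 v) ⋯)`. -/
def mlpRep (ρ : ℝ) {din D : ℕ} (B1 : Matrix (Fin D) (Fin din) ℝ)
    (Bs : List (Matrix (Fin D) (Fin D) ℝ)) (v : Fin din → ℝ) : Fin D → ℝ :=
  Bs.foldl (fun u B => lreluV ρ (B *ᵥ u)) (lreluV ρ (B1 *ᵥ v))

/-- Ridge empirical risk over the first `n` samples
(equal to `λ/2 ‖w‖²` for `n = 0`, matching the convention `L̂_0 := 0`). -/
def ridgeLoss (lam : ℝ) {D : ℕ} (n : ℕ) (x : ℕ → Fin D → ℝ) (y : ℕ → ℝ)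
    (w : Fin D → ℝ) : ℝ :=
  (1/(2*(n:ℝ))) * ∑ j ∈ Finset.range n, (w ⬝ᵥ x j - y j)^2 + lam/2 * ∑ r, (w r)^2


/-! ### Auxiliary lemmas for `copy_by_single_attention_head` -/

lemma relu_zero' : relu 0 = 0 := by simp [relu]

lemma tailVec_mk' {m Dhid : ℕ} (a : Fin m → ℝ) (s : ℕ) (hs : s < m) (hD : m ≤ Dhid)
    (r : Fin Dhid) (hr : (r : ℕ) = Dhid - m + s) :
    tailVec Dhid a r = a ⟨s, hs⟩ := by
  simp only [tailVec]
  split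
  · split
    · congr 1; ext; simp; omega
    · exfalso; omega
  · exfalso; omega

lemma supInput_tail' {d N Dhid : ℕ} (hD : d + 9 ≤ Dhid)
    (x : ℕ → Fin d → ℝ) (y : ℕ → ℝ) (t : Fin (2*N)) (s : ℕ) (hs : s < 8)
    (r : Fin Dhid) (hr : (r : ℕ) = Dhid - 8 + s) :
    supInput Dhid d N x y t r =
      (if (t:ℕ) % 2 = 0 then
        ![1, 2*(((t:ℕ)/2+1:ℕ):ℝ)-1, (2*(((t:ℕ)/2+1:ℕ):ℝ)-1)^2, (2*(((t:ℕ)/2+1:ℕ):ℝ)-1)^3,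
          (((t:ℕ)/2+1:ℕ):ℝ), (((t:ℕ)/2+1:ℕ):ℝ)^2, 1, (((t:ℕ)/2+1:ℕ):ℝ)]
      else
        ![1, 2*(((t:ℕ)/2+1:ℕ):ℝ), (2*(((t:ℕ)/2+1:ℕ):ℝ))^2, (2*(((t:ℕ)/2+1:ℕ):ℝ))^3,
          (((t:ℕ)/2+1:ℕ):ℝ), (((t:ℕ)/2+1:ℕ):ℝ)^2, 0, 0]) ⟨s, hs⟩ := by
  have h1 : ¬ ((r : ℕ) < d) := by omega
  have h2 : ¬ ((r : ℕ) = d) := by omega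
  simp only [supInput, supFormat]
  rw [dif_neg h1, if_neg h2]
  by_cases hp : (t:ℕ) % 2 = 0 <;>
    simp only [hp, if_true, if_false, posXvec, posYvec] <;>
    exact tailVec_mk' _ s hs (by omega) r hr

noncomputable def copyQ (Dhid : ℕ) (h : 10 ≤ Dhid) : Matrix (Fin Dhid) (Fin Dhid) ℝ :=
  Matrix.of fun r c =>
    (if r = (⟨0, by omega⟩ : Fin Dhid) then
      ((if c = (⟨Dhid-8, by omega⟩ : Fin Dhid) then (1:ℝ) else 0)
        - (if c = (⟨Dhid-2, by omega⟩ : Fin Dhid) then 1 else 0)) else 0)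
    + (if r = (⟨1, by omega⟩ : Fin Dhid) then
      ((if c = (⟨Dhid-4, by omega⟩ : Fin Dhid) then (1:ℝ) else 0)
        - (if c = (⟨Dhid-1, by omega⟩ : Fin Dhid) then 1 else 0)) else 0)

noncomputable def copyK (Dhid : ℕ) (h : 10 ≤ Dhid) (C : ℝ) : Matrix (Fin Dhid) (Fin Dhid) ℝ :=
  Matrix.of fun r c =>
    (if r = (⟨0, by omega⟩ : Fin Dhid) then
      (if c = (⟨Dhid-1, by omega⟩ : Fin Dhid) then C else 0) else 0)
    + (if r = (⟨1, by omega⟩ : Fin Dhid) then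
      (if c = (⟨Dhid-2, by omega⟩ : Fin Dhid) then 2 - C else 0) else 0)

def copyV (d Dhid : ℕ) : Matrix (Fin Dhid) (Fin Dhid) ℝ :=
  Matrix.of fun r c => if (r:ℕ) < d then (if c = r then 1 else 0) else 0

lemma copyQ_mulVec (Dhid : ℕ) (h : 10 ≤ Dhid) (v : Fin Dhid → ℝ) :
    copyQ Dhid h *ᵥ v = fun r =>
      (if r = (⟨0, by omega⟩ : Fin Dhid) then v ⟨Dhid-8, by omega⟩ - v ⟨Dhid-2, by omega⟩ else 0)
      + (if r = (⟨1, by omega⟩ : Fin Dhid) then v ⟨Dhid-4, by omega⟩ - v ⟨Dhid-1, by omega⟩ else 0) := by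
  funext r
  simp [copyQ, Matrix.mulVec, dotProduct, add_mul, sub_mul, ite_mul,
    Finset.sum_add_distrib, Finset.sum_sub_distrib, Finset.sum_ite_eq']

lemma copyK_mulVec (Dhid : ℕ) (h : 10 ≤ Dhid) (C : ℝ) (v : Fin Dhid → ℝ) :
    copyK Dhid h C *ᵥ v = fun r =>
      (if r = (⟨0, by omega⟩ : Fin Dhid) then C * v ⟨Dhid-1, by omega⟩ else 0)
      + (if r = (⟨1, by omega⟩ : Fin Dhid) then (2 - C) * v ⟨Dhid-2, by omega⟩ else 0) := by
  funext r
  by_cases h0 : r = (⟨0, by omega⟩ : Fin Dhid) <;>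
  by_cases h1 : r = (⟨1, by omega⟩ : Fin Dhid) <;>
    simp_all [copyK, Matrix.mulVec, dotProduct, add_mul, ite_mul,
      Finset.sum_add_distrib, Finset.sum_ite_eq', Fin.mk.injEq]

lemma copyV_mulVec (d Dhid : ℕ) (v : Fin Dhid → ℝ) :
    copyV d Dhid *ᵥ v = fun r : Fin Dhid => if (r:ℕ) < d then v r else 0 := by
  funext r
  by_cases hr : (r:ℕ) < d <;>
    simp [copyV, Matrix.mulVec, dotProduct, hr, ite_mul, Finset.sum_ite_eq']

lemma dot_two {n : ℕ} (a b : Fin n) (hab : a ≠ b) (A B A' B' : ℝ) :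
    (fun r => (if r = a then A else 0) + (if r = b then B else 0)) ⬝ᵥ
    (fun r => (if r = a then A' else 0) + (if r = b then B' else 0)) = A*A' + B*B' := by
  simp [dotProduct, add_mul, mul_add, ite_mul, mul_ite,
    Finset.sum_add_distrib, Finset.sum_ite_eq', hab, hab.symm]

/-- **Copying by a single attention head.**
For any `d, N ≥ 1` and `D_hid ≥ d + 9`, there is a single-head masked attention
layer which, on any input of the supervised format, copies each `x_i` into the
succeeding `y`-token and leaves all other entries unchanged:
the output has columns `h_{2i-1} = [x_i; 0; p^x_i]`, `h_{2i} = [x_i; y_i; p^y_i]`. -/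
theorem copy_by_single_attention_head (d N Dhid : ℕ)
    (hd : 1 ≤ d) (hN : 1 ≤ N) (hDhid : d + 9 ≤ Dhid) :
    ∃ head : AttnHead Dhid,
      ∀ (x : ℕ → Fin d → ℝ) (y : ℕ → ℝ),
        attnLayer (fun _ : Fin 1 => head) (supInput Dhid d N x y)
          = supFormat Dhid d N x x y := by
  have h10 : 10 ≤ Dhid := by omega
  set C : ℝ := 2*(N:ℝ) + 2 with hC
  refine ⟨⟨copyQ Dhid h10, copyK Dhid h10 C, copyV d Dhid⟩, ?_⟩
  intro x y
  set H := supInput Dhid d N x y with hH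
  have hne01 : (⟨0, by omega⟩ : Fin Dhid) ≠ (⟨1, by omega⟩ : Fin Dhid) := by
    simp [Fin.ext_iff]
  -- coordinate facts
  have hcA : ∀ u : Fin (2*N), H u ⟨Dhid - 8, by omega⟩ = 1 := by
    intro u
    rw [hH, supInput_tail' hDhid x y u 0 (by norm_num) _ (by show Dhid - 8 = Dhid - 8 + 0; omega)]
    split <;> rfl
  have hcI : ∀ u : Fin (2*N), H u ⟨Dhid - 4, by omega⟩ = (((u:ℕ)/2+1 : ℕ) : ℝ) := by
    intro u
    rw [hH, supInput_tail' hDhid x y u 4 (by norm_num) _ (by show Dhid - 4 = Dhid - 8 + 4; omega)]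
    split <;> rfl
  have hcX : ∀ u : Fin (2*N), H u ⟨Dhid - 2, by omega⟩ =
      if (u:ℕ) % 2 = 0 then 1 else 0 := by
    intro u
    rw [hH, supInput_tail' hDhid x y u 6 (by norm_num) _ (by show Dhid - 2 = Dhid - 8 + 6; omega)]
    split <;> rfl
  have hcXI : ∀ u : Fin (2*N), H u ⟨Dhid - 1, by omega⟩ =
      if (u:ℕ) % 2 = 0 then (((u:ℕ)/2+1 : ℕ) : ℝ) else 0 := by
    intro u
    rw [hH, supInput_tail' hDhid x y u 7 (by norm_num) _ (by show Dhid - 1 = Dhid - 8 + 7; omega)]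
    split <;> rfl
  funext t
  simp only [attnLayer, Fin.sum_univ_one]
  by_cases ht : (t:ℕ) % 2 = 0
  · -- even token: query vanishes, nothing is added
    have hq0 : copyQ Dhid h10 *ᵥ H t = 0 := by
      rw [copyQ_mulVec]
      funext r
      simp [hcA, hcX, hcI, hcXI, ht]
    rw [hq0]
    simp only [zero_dotProduct, relu_zero', zero_smul,
      Finset.sum_const_zero, smul_zero, add_zero]
    funext r
    simp [hH, supInput, supFormat, ht]
  · -- odd token
    obtain ⟨i, hti⟩ : ∃ i, (t:ℕ) = 2*i+1 := ⟨(t:ℕ)/2, by omega⟩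
    have hiN : i + 1 ≤ N := by have := t.isLt; omega
    have hq : copyQ Dhid h10 *ᵥ H t = fun r =>
        (if r = (⟨0, by omega⟩ : Fin Dhid) then 1 else 0)
        + (if r = (⟨1, by omega⟩ : Fin Dhid) then ((i+1 : ℕ) : ℝ) else 0) := by
      rw [copyQ_mulVec]
      funext r
      have hd2 : (t:ℕ)/2 + 1 = i + 1 := by omega
      simp [hcA, hcX, hcI, hcXI, ht, hd2]
    have hdot : ∀ j : Fin (2*N),
        (copyQ Dhid h10 *ᵥ H t) ⬝ᵥ (copyK Dhid h10 C *ᵥ H j)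
          = 1 * (C * H j ⟨Dhid-1, by omega⟩)
            + ((i+1 : ℕ) : ℝ) * ((2 - C) * H j ⟨Dhid-2, by omega⟩) := by
      intro j
      rw [hq, copyK_mulVec]
      exact dot_two _ _ hne01 _ _ _ _
    set j0 : Fin (2*N) := ⟨2*i, by omega⟩ with hj0
    have hmem : j0 ∈ Finset.Iic t := by
      simp [Finset.mem_Iic, Fin.le_def, hj0, hti]
    have hsum : ∑ j ∈ Finset.Iic t,
        relu ((copyQ Dhid h10 *ᵥ H t) ⬝ᵥ (copyK Dhid h10 C *ᵥ H j))
          • (copyV d Dhid *ᵥ H j)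
        = (2*((i:ℝ)+1)) • (copyV d Dhid *ᵥ H j0) := by
      rw [Finset.sum_eq_single_of_mem j0 hmem]
      · have hj0e : (j0:ℕ) % 2 = 0 := by show 2*i % 2 = 0; omega
        have hj0d : (j0:ℕ)/2 + 1 = i + 1 := by show 2*i/2 + 1 = i + 1; omega
        rw [hdot j0, hcXI j0, hcX j0, if_pos hj0e, if_pos hj0e, hj0d]
        have hval : 1 * (C * ((i+1:ℕ):ℝ)) + ((i+1:ℕ):ℝ) * ((2 - C) * 1)
            = 2*((i:ℝ)+1) := by push_cast; ring
        rw [hval]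
        congr 1
        have hpos : (0:ℝ) ≤ 2*((i:ℝ)+1) := by positivity
        simp [relu, max_eq_left hpos]
      · intro j hj hjne
        by_cases hj2 : (j:ℕ) % 2 = 0
        · -- an earlier x-token: score is very negative
          obtain ⟨k, hk⟩ : ∃ k, (j:ℕ) = 2*k := ⟨(j:ℕ)/2, by omega⟩
          have hjle : (j:ℕ) ≤ (t:ℕ) := Fin.le_def.mp (Finset.mem_Iic.mp hj)
          have hkival : (j:ℕ) ≠ 2*i := fun hcontra => hjne (Fin.ext hcontra)
          have hki : k + 1 ≤ i := by omega
          have hjd : (j:ℕ)/2 + 1 = k + 1 := by omega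
          rw [hdot j, hcXI j, hcX j, if_pos hj2, if_pos hj2, hjd]
          have hscore : 1 * (C * ((k+1:ℕ):ℝ)) + ((i+1:ℕ):ℝ) * ((2 - C) * 1) ≤ 0 := by
            have hc1 : ((k:ℝ)+1) ≤ (i:ℝ) := by exact_mod_cast hki
            have hc2 : ((i:ℝ)+1) ≤ (N:ℝ) := by exact_mod_cast hiN
            have hCpos : (0:ℝ) ≤ C := by rw [hC]; positivity
            push_cast
            nlinarith [mul_le_mul_of_nonneg_left hc1 hCpos, hc2, hC, hCpos]
          have hz : relu (1 * (C * ((k+1:ℕ):ℝ)) + ((i+1:ℕ):ℝ) * ((2 - C) * 1)) = 0 :=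
            max_eq_right hscore
          rw [hz, zero_smul]
        · -- a y-token: key vanishes
          rw [hdot j, hcXI j, hcX j, if_neg hj2, if_neg hj2]
          simp [relu_zero']
    rw [hsum, smul_smul]
    have hcoef : 1 / (((t:ℕ):ℝ) + 1) * (2*((i:ℝ)+1)) = 1 := by
      have hteq : ((t:ℕ):ℝ) + 1 = 2*((i:ℝ)+1) := by rw [hti]; push_cast; ring
      rw [hteq]
      exact one_div_mul_cancel (by positivity)
    rw [hcoef, one_smul, copyV_mulVec]
    funext r
    simp only [Pi.add_apply]
    by_cases hr : (r:ℕ) < d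
    · have hj0e : (j0:ℕ) % 2 = 0 := by show 2*i % 2 = 0; omega
      have hj0d : (j0:ℕ)/2 = i := by show 2*i/2 = i; omega
      have htd : (t:ℕ)/2 = i := by omega
      simp [hH, supInput, supFormat, hr, ht, hj0e, hj0d, htd]
    · simp only [if_neg hr, add_zero]
      simp [hH, supInput, supFormat, hr, ht]

end
end

section
/- For any B_x, B_w, B_y > 0 and any D_hid ≥ 2d + 10, there exists a masked attention layer with 2 heads such that the following holds: for any N and any input H ∈ ℝ^{D_hid×2N} with columns h_{2i−1} = [x_i; 0; w_i; p^x_i] and h_{2i} = [x_i; y_i; 0_d; p^y_i] (i ∈ [N]) satisfying ‖x_i‖₂ ≤ B_x, |y_i| ≤ B_y and ‖w_i‖₂ ≤ B_w for all i, the output Attn(H) has column 2i−1 equal to [x_i; ŷ_i; w_i; p^x_i] with ŷ_i = ⟨x_i, w_i⟩, for every i ∈ [N]. -/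
open scoped BigOperators Matrix

noncomputable section

/-- Token format for the in-context gradient-descent layers: the x-token
`2i-1` is `[x_i; yhat_i; w_i; p^x_i]` and the y-token `2i` is
`[x_i; y_i; 0_d; p^y_i]` (0-based `i = t/2`). -/
def gdFormat (Dhid d N : ℕ) (x : ℕ → Fin d → ℝ) (y yhat : ℕ → ℝ)
    (w : ℕ → Fin d → ℝ) : Fin (2*N) → Fin Dhid → ℝ := fun t r =>
  if h : (r : ℕ) < d then x ((t : ℕ)/2) ⟨(r : ℕ), h⟩
  else if h1 : (r : ℕ) = d then
    (if (t : ℕ) % 2 = 0 then yhat ((t : ℕ)/2) else y ((t : ℕ)/2))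
  else if h2 : (r : ℕ) < 2*d + 1 then
    (if (t : ℕ) % 2 = 0 then w ((t : ℕ)/2) ⟨(r : ℕ) - (d + 1), by omega⟩ else 0)
  else if (t : ℕ) % 2 = 0 then posXvec Dhid ((t : ℕ)/2 + 1) r
  else posYvec Dhid ((t : ℕ)/2 + 1) r


/-! ### Auxiliary constructions for `linear_prediction_layer` -/

lemma tailVec_eq (Dhid m k : ℕ) (hk : k < m) (hm : m ≤ Dhid) (a : Fin m → ℝ)
    (r : Fin Dhid) (hr : (r : ℕ) = Dhid - m + k) :
    tailVec Dhid a r = a ⟨k, hk⟩ := by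
  unfold tailVec
  have h1 : Dhid ≤ (r : ℕ) + m := by omega
  have h2 : (r : ℕ) + m - Dhid < m := by omega
  rw [dif_pos h1, dif_pos h2]
  congr 1
  apply Fin.ext
  simp only [Fin.val_mk]
  omega

lemma sum_dsplit (D d : ℕ) (hD : d + 2 ≤ D) (a : Fin d → ℝ) (b c : ℝ) :
    (∑ r : Fin D, if h : (r : ℕ) < d then a ⟨(r : ℕ), h⟩
      else if (r : ℕ) = d then b else if (r : ℕ) = d + 1 then c else 0)
      = (∑ s, a s) + b + c := by
  rw [Fin.sum_univ_eq_sum_range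
    (fun k => if h : k < d then a ⟨k, h⟩ else if k = d then b else if k = d + 1 then c else 0) D]
  rw [← Finset.sum_subset (Finset.range_subset_range.2 hD)
    (by intro k _ hk; simp only [Finset.mem_range] at hk
        rw [dif_neg (by omega), if_neg (by omega), if_neg (by omega)])]
  rw [Finset.sum_range_succ, Finset.sum_range_succ]
  rw [dif_neg (by omega), dif_neg (by omega), if_pos rfl, if_neg (by omega), if_pos rfl]
  have : (∑ k ∈ Finset.range d, if h : k < d then a ⟨k, h⟩
      else if k = d then b else if k = d + 1 then c else 0) = ∑ s, a s := by
    rw [← Fin.sum_univ_eq_sum_range]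
    exact Finset.sum_congr rfl fun s _ => by rw [dif_pos s.isLt]
  rw [this]

lemma dot_abs_le {n : ℕ} (v u : Fin n → ℝ) :
    |v ⬝ᵥ u| ≤ Real.sqrt (∑ i, (v i) ^ 2) * Real.sqrt (∑ i, (u i) ^ 2) := by
  rw [← Real.sqrt_mul (by positivity), ← Real.sqrt_sq_eq_abs]
  exact Real.sqrt_le_sqrt (Finset.sum_mul_sq_le_sq_mul_sq _ _ _)

lemma relu_sub_relu_neg (u : ℝ) : relu u - relu (-u) = u := by
  unfold relu
  rcases le_total u 0 with h | h
  · rw [max_eq_right h, max_eq_left (by linarith)]; ring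
  · rw [max_eq_left h, max_eq_right (by linarith)]; ring

lemma relu_of_nonpos {u : ℝ} (h : u ≤ 0) : relu u = 0 := max_eq_right h


/-- Query matrix: rows `0..d-1` copy (scaled by `s`) the x-block, row `d`
copies the position `n`, row `d+1` copies the constant `1`. -/
def Qmat (d Dhid : ℕ) (s : ℝ) : Matrix (Fin Dhid) (Fin Dhid) ℝ :=
  Matrix.of fun r c =>
    if (r : ℕ) < d then (if (c : ℕ) = (r : ℕ) then s else 0)
    else if (r : ℕ) = d then (if (c : ℕ) = Dhid - 7 then 1 else 0)
    else if (r : ℕ) = d + 1 then (if (c : ℕ) = Dhid - 8 then 1 else 0)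
    else 0

/-- Key matrix: rows `0..d-1` copy the w-block, row `d` is `-M` times constant,
row `d+1` is `M` times position. -/
def Kmat (d Dhid : ℕ) (M : ℝ) : Matrix (Fin Dhid) (Fin Dhid) ℝ :=
  Matrix.of fun r c =>
    if (r : ℕ) < d then (if (c : ℕ) = d + 1 + (r : ℕ) then 1 else 0)
    else if (r : ℕ) = d then (if (c : ℕ) = Dhid - 8 then -M else 0)
    else if (r : ℕ) = d + 1 then (if (c : ℕ) = Dhid - 7 then M else 0)
    else 0

/-- Value matrix: row `d` is `s` times the position coordinate. -/
def Vmat (d Dhid : ℕ) (s : ℝ) : Matrix (Fin Dhid) (Fin Dhid) ℝ :=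
  Matrix.of fun r c =>
    if (r : ℕ) = d then (if (c : ℕ) = Dhid - 7 then s else 0) else 0

lemma row_dot {Dhid : ℕ} (k : ℕ) (hk : k < Dhid) (a : ℝ) (h : Fin Dhid → ℝ) :
    (∑ c : Fin Dhid, (if (c : ℕ) = k then a else 0) * h c) = a * h ⟨k, hk⟩ := by
  rw [Finset.sum_eq_single (⟨k, hk⟩ : Fin Dhid)]
  · simp
  · intro c _ hc
    rw [if_neg (fun hh => hc (Fin.ext hh)), zero_mul]
  · simp

lemma Qmat_mulVec {d Dhid : ℕ} (hD : 2*d + 10 ≤ Dhid) (s : ℝ) (h : Fin Dhid → ℝ)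
    (r : Fin Dhid) :
    (Qmat d Dhid s *ᵥ h) r =
      if (r : ℕ) < d then s * h r
      else if (r : ℕ) = d then h ⟨Dhid - 7, by omega⟩
      else if (r : ℕ) = d + 1 then h ⟨Dhid - 8, by omega⟩
      else 0 := by
  unfold Qmat Matrix.mulVec dotProduct
  by_cases h1 : (r : ℕ) < d
  · simp only [Matrix.of_apply, if_pos h1]
    rw [row_dot (r : ℕ) r.isLt s h, Fin.eta]
  by_cases h2 : (r : ℕ) = d
  · simp only [Matrix.of_apply, if_neg h1, if_pos h2]
    rw [row_dot (Dhid - 7) (by omega) 1 h, one_mul]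
  by_cases h3 : (r : ℕ) = d + 1
  · simp only [Matrix.of_apply, if_neg h1, if_neg h2, if_pos h3]
    rw [row_dot (Dhid - 8) (by omega) 1 h, one_mul]
  · simp only [Matrix.of_apply, if_neg h1, if_neg h2, if_neg h3]
    simp

lemma Kmat_mulVec {d Dhid : ℕ} (hD : 2*d + 10 ≤ Dhid) (M : ℝ) (h : Fin Dhid → ℝ)
    (r : Fin Dhid) :
    (Kmat d Dhid M *ᵥ h) r =
      if h1 : (r : ℕ) < d then h ⟨d + 1 + (r : ℕ), by omega⟩
      else if (r : ℕ) = d then -M * h ⟨Dhid - 8, by omega⟩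
      else if (r : ℕ) = d + 1 then M * h ⟨Dhid - 7, by omega⟩
      else 0 := by
  unfold Kmat Matrix.mulVec dotProduct
  by_cases h1 : (r : ℕ) < d
  · simp only [Matrix.of_apply, if_pos h1, dif_pos h1]
    rw [row_dot (d + 1 + (r : ℕ)) (by omega) 1 h, one_mul]
  by_cases h2 : (r : ℕ) = d
  · simp only [Matrix.of_apply, if_neg h1, dif_neg h1, if_pos h2]
    rw [row_dot (Dhid - 8) (by omega) (-M) h]
  by_cases h3 : (r : ℕ) = d + 1
  · simp only [Matrix.of_apply, if_neg h1, dif_neg h1, if_neg h2, if_pos h3]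
    rw [row_dot (Dhid - 7) (by omega) M h]
  · simp only [Matrix.of_apply, if_neg h1, dif_neg h1, if_neg h2, if_neg h3]
    simp

lemma Vmat_mulVec {d Dhid : ℕ} (hD : 2*d + 10 ≤ Dhid) (s : ℝ) (h : Fin Dhid → ℝ)
    (r : Fin Dhid) :
    (Vmat d Dhid s *ᵥ h) r =
      if (r : ℕ) = d then s * h ⟨Dhid - 7, by omega⟩ else 0 := by
  unfold Vmat Matrix.mulVec dotProduct
  by_cases h1 : (r : ℕ) = d
  · simp only [Matrix.of_apply, if_pos h1]
    rw [row_dot (Dhid - 7) (by omega) s h]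
  · simp only [Matrix.of_apply, if_neg h1]
    simp


section gdFormatLemmas

variable {Dhid d N : ℕ} {x : ℕ → Fin d → ℝ} {y yhat : ℕ → ℝ} {w : ℕ → Fin d → ℝ}

lemma gdFormat_x (t : Fin (2*N)) (r : Fin Dhid) (h : (r : ℕ) < d) :
    gdFormat Dhid d N x y yhat w t r = x ((t : ℕ)/2) ⟨(r : ℕ), h⟩ := by
  unfold gdFormat; rw [dif_pos h]

lemma gdFormat_d (t : Fin (2*N)) (r : Fin Dhid) (h : (r : ℕ) = d) :
    gdFormat Dhid d N x y yhat w t r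
      = if (t : ℕ) % 2 = 0 then yhat ((t : ℕ)/2) else y ((t : ℕ)/2) := by
  unfold gdFormat; rw [dif_neg (by omega), dif_pos h]

lemma gdFormat_w (t : Fin (2*N)) (r : Fin Dhid) (h1 : d < (r : ℕ))
    (h2 : (r : ℕ) < 2*d + 1) :
    gdFormat Dhid d N x y yhat w t r
      = if (t : ℕ) % 2 = 0 then w ((t : ℕ)/2) ⟨(r : ℕ) - (d + 1), by omega⟩
        else 0 := by
  unfold gdFormat; rw [dif_neg (by omega), dif_neg (by omega), dif_pos h2]

lemma gdFormat_c1 (hD : 2*d + 10 ≤ Dhid) (t : Fin (2*N)) (r : Fin Dhid)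
    (h : (r : ℕ) = Dhid - 8) :
    gdFormat Dhid d N x y yhat w t r = 1 := by
  unfold gdFormat
  rw [dif_neg (by omega), dif_neg (by omega), dif_neg (by omega)]
  by_cases hp : (t : ℕ) % 2 = 0
  · rw [if_pos hp]
    unfold posXvec
    rw [tailVec_eq Dhid 8 0 (by omega) (by omega) _ r (by omega)]
    simp
  · rw [if_neg hp]
    unfold posYvec
    rw [tailVec_eq Dhid 8 0 (by omega) (by omega) _ r (by omega)]
    simp

lemma gdFormat_cn (hD : 2*d + 10 ≤ Dhid) (t : Fin (2*N)) (r : Fin Dhid)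
    (h : (r : ℕ) = Dhid - 7) :
    gdFormat Dhid d N x y yhat w t r = ((t : ℕ) : ℝ) + 1 := by
  unfold gdFormat
  rw [dif_neg (by omega), dif_neg (by omega), dif_neg (by omega)]
  by_cases hp : (t : ℕ) % 2 = 0
  · rw [if_pos hp]
    unfold posXvec
    rw [tailVec_eq Dhid 8 1 (by omega) (by omega) _ r (by omega)]
    have h2 : 2 * ((t : ℕ)/2) = (t : ℕ) := by omega
    have h3 : (2 * ((t : ℕ)/2) : ℕ) = ((t : ℕ) : ℕ) := h2
    have h4 : ((2 * ((t : ℕ)/2) : ℕ) : ℝ) = (((t : ℕ) : ℕ) : ℝ) := by rw [h3]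
    push_cast at h4 ⊢
    linarith
  · rw [if_neg hp]
    unfold posYvec
    rw [tailVec_eq Dhid 8 1 (by omega) (by omega) _ r (by omega)]
    have h2 : 2 * ((t : ℕ)/2) + 1 = (t : ℕ) := by omega
    have h4 : ((2 * ((t : ℕ)/2) + 1 : ℕ) : ℝ) = (((t : ℕ) : ℕ) : ℝ) := by rw [h2]
    push_cast at h4 ⊢
    linarith

lemma gdFormat_congr_yhat {yhat' : ℕ → ℝ} (t : Fin (2*N)) (r : Fin Dhid)
    (hr : (r : ℕ) ≠ d) :
    gdFormat Dhid d N x y yhat w t r = gdFormat Dhid d N x y yhat' w t r := by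
  unfold gdFormat
  by_cases h : (r : ℕ) < d
  · rw [dif_pos h, dif_pos h]
  · rw [dif_neg h, dif_neg h, dif_neg hr, dif_neg hr]

end gdFormatLemmas

/-- **Linear prediction layer (Lemma `linear-prediction`).**
For any `B_x, B_w, B_y > 0` and `D_hid ≥ 2d + 10` there is a 2-head masked
attention layer such that on any input with columns
`h_{2i-1} = [x_i; 0; w_i; p^x_i]`, `h_{2i} = [x_i; y_i; 0_d; p^y_i]` with
`‖x_i‖₂ ≤ B_x`, `|y_i| ≤ B_y`, `‖w_i‖₂ ≤ B_w`, the output has columns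
`2i-1` equal to `[x_i; ŷ_i; w_i; p^x_i]` with `ŷ_i = ⟨x_i, w_i⟩`. -/
theorem linear_prediction_layer (d Dhid : ℕ) (Bx Bw By : ℝ)
    (hBx : 0 < Bx) (hBw : 0 < Bw) (hBy : 0 < By)
    (hDhid : 2*d + 10 ≤ Dhid) :
    ∃ heads : Fin 2 → AttnHead Dhid,
      ∀ (N : ℕ) (x w : ℕ → Fin d → ℝ) (y : ℕ → ℝ),
        (∀ i < N, l2norm (x i) ≤ Bx) →
        (∀ i < N, |y i| ≤ By) →
        (∀ i < N, l2norm (w i) ≤ Bw) →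
        ∀ i : Fin N, ∀ r : Fin Dhid,
          attnLayer heads (gdFormat Dhid d N x y (fun _ => 0) w)
              ⟨2*(i : ℕ), by have := i.2; omega⟩ r
            = gdFormat Dhid d N x y (fun j => x j ⬝ᵥ w j) w
              ⟨2*(i : ℕ), by have := i.2; omega⟩ r := by
  classical
  set M : ℝ := Bx * Bw with hMdef
  have hM : 0 < M := mul_pos hBx hBw
  refine ⟨![⟨Qmat d Dhid 1, Kmat d Dhid M, Vmat d Dhid 1⟩,
            ⟨Qmat d Dhid (-1), Kmat d Dhid M, Vmat d Dhid (-1)⟩], ?_⟩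
  intro N x w y hx hy hw i r
  set H : Fin (2*N) → Fin Dhid → ℝ := gdFormat Dhid d N x y (fun _ => 0) w with hHdef
  set t : Fin (2*N) := ⟨2*(i : ℕ), by have := i.2; omega⟩ with htdef
  have htv : (t : ℕ) = 2*(i : ℕ) := rfl
  have hte : (t : ℕ) % 2 = 0 := by omega
  have htdiv : (t : ℕ)/2 = (i : ℕ) := by omega
  -- the w-block of column j
  set Wf : Fin (2*N) → Fin d → ℝ :=
    fun j s' => if (j : ℕ) % 2 = 0 then w ((j : ℕ)/2) s' else 0 with hWf
  -- score formula
  have score : ∀ (s : ℝ) (j : Fin (2*N)),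
      (Qmat d Dhid s *ᵥ H t) ⬝ᵥ (Kmat d Dhid M *ᵥ H j)
        = s * (x (i : ℕ) ⬝ᵥ Wf j)
          + (-(M * (((t : ℕ) : ℝ) + 1)) + M * (((j : ℕ) : ℝ) + 1)) := by
    intro s j
    unfold dotProduct
    have key : ∀ c : Fin Dhid,
        (Qmat d Dhid s *ᵥ H t) c * (Kmat d Dhid M *ᵥ H j) c
          = if h : (c : ℕ) < d then (s * x (i : ℕ) ⟨(c : ℕ), h⟩) * Wf j ⟨(c : ℕ), h⟩
            else if (c : ℕ) = d then -(M * (((t : ℕ) : ℝ) + 1))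
            else if (c : ℕ) = d + 1 then M * (((j : ℕ) : ℝ) + 1)
            else 0 := by
      intro c
      rw [Qmat_mulVec hDhid, Kmat_mulVec hDhid]
      by_cases h1 : (c : ℕ) < d
      · rw [if_pos h1, dif_pos h1, dif_pos h1]
        have hxc : H t c = x (i : ℕ) ⟨(c : ℕ), h1⟩ := by
          rw [hHdef, gdFormat_x t c h1, htdiv]
        have hwc : H j ⟨d + 1 + (c : ℕ), by omega⟩ = Wf j ⟨(c : ℕ), h1⟩ := by
          rw [hHdef, gdFormat_w j _ (by simp; omega) (by simp; omega), hWf]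
          by_cases hp : (j : ℕ) % 2 = 0
          · rw [if_pos hp]; simp only [if_pos hp]
            congr 1
            apply Fin.ext
            simp only [Fin.val_mk]
            omega
          · rw [if_neg hp]; simp only [if_neg hp]
        rw [hxc, hwc]
      by_cases h2 : (c : ℕ) = d
      · rw [if_neg h1, if_pos h2, dif_neg h1, dif_neg h1, if_pos h2, if_pos h2]
        rw [hHdef, gdFormat_cn hDhid t _ (by simp), gdFormat_c1 hDhid j _ (by simp)]
        ring
      by_cases h3 : (c : ℕ) = d + 1
      · rw [if_neg h1, if_neg h2, if_pos h3, dif_neg h1, dif_neg h1,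
          if_neg h2, if_neg h2, if_pos h3, if_pos h3]
        rw [hHdef, gdFormat_c1 hDhid t _ (by simp), gdFormat_cn hDhid j _ (by simp)]
        ring
      · simp only [if_neg h1, if_neg h2, if_neg h3, dif_neg h1, mul_zero, zero_mul]
    rw [Finset.sum_congr rfl (fun c _ => key c)]
    refine Eq.trans (sum_dsplit Dhid d (by omega)
      (fun s' => (s * x (i : ℕ) s') * Wf j s')
      (-(M * (((t : ℕ) : ℝ) + 1))) (M * (((j : ℕ) : ℝ) + 1))) ?_
    have : (∑ s' : Fin d, (s * x (i : ℕ) s') * Wf j s') = s * (x (i : ℕ) ⬝ᵥ Wf j) := by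
      unfold dotProduct
      rw [Finset.mul_sum]
      exact Finset.sum_congr rfl fun s' _ => by ring
    rw [this]
    unfold dotProduct
    ring
  -- bound on the cross term
  have hdot : ∀ j : Fin (2*N), |x (i : ℕ) ⬝ᵥ Wf j| ≤ M := by
    intro j
    by_cases hp : (j : ℕ) % 2 = 0
    · have hWj : Wf j = w ((j : ℕ)/2) := by funext s'; rw [hWf]; simp [hp]
      rw [hWj]
      calc |x (i : ℕ) ⬝ᵥ w ((j : ℕ)/2)|
          ≤ Real.sqrt (∑ k, (x (i : ℕ) k) ^ 2) * Real.sqrt (∑ k, (w ((j : ℕ)/2) k) ^ 2) :=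
            dot_abs_le _ _
        _ ≤ Bx * Bw := by
            apply mul_le_mul (hx _ i.2) (hw _ (by have := j.2; omega))
              (Real.sqrt_nonneg _) (le_of_lt hBx)
    · have hWj : Wf j = fun _ => 0 := by funext s'; rw [hWf]; simp [hp]
      rw [hWj]
      simp [dotProduct, le_of_lt hM]
  -- off-diagonal scores are nonpositive
  have hrelu0 : ∀ (s : ℝ), s = 1 ∨ s = -1 → ∀ j : Fin (2*N), j ∈ Finset.Iic t → j ≠ t →
      relu ((Qmat d Dhid s *ᵥ H t) ⬝ᵥ (Kmat d Dhid M *ᵥ H j)) = 0 := by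
    intro s hs j hj hjt
    have hjlt : (j : ℕ) < (t : ℕ) := by
      have := Finset.mem_Iic.1 hj
      have h' : (j : ℕ) ≤ (t : ℕ) := this
      rcases lt_or_eq_of_le h' with h | h
      · exact h
      · exact absurd (Fin.ext h) hjt
    have hjr : ((j : ℕ) : ℝ) + 1 ≤ ((t : ℕ) : ℝ) := by
      have : (j : ℕ) + 1 ≤ (t : ℕ) := hjlt
      exact_mod_cast this
    apply relu_of_nonpos
    rw [score s j]
    have hsu : s * (x (i : ℕ) ⬝ᵥ Wf j) ≤ M := by
      rcases hs with h | h
      · rw [h, one_mul]; exact (le_abs_self _).trans (hdot j)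
      · rw [h, neg_one_mul]; exact (neg_le_abs _).trans (hdot j)
    nlinarith [hdot j]
  -- value vector entries
  have hVal : ∀ (s : ℝ) (j : Fin (2*N)), (Vmat d Dhid s *ᵥ H j) r
      = if (r : ℕ) = d then s * (((j : ℕ) : ℝ) + 1) else 0 := by
    intro s j
    rw [Vmat_mulVec hDhid]
    by_cases hrr : (r : ℕ) = d
    · rw [if_pos hrr, if_pos hrr, hHdef, gdFormat_cn hDhid j _ (by simp)]
    · rw [if_neg hrr, if_neg hrr]
  simp only [attnLayer, Fin.sum_univ_two, Matrix.cons_val_zero, Matrix.cons_val_one,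
    Matrix.head_cons, Pi.add_apply, Pi.smul_apply, Finset.sum_apply, smul_eq_mul]
  by_cases hr : (r : ℕ) = d
  · have hu : x (i : ℕ) ⬝ᵥ Wf t = x (i : ℕ) ⬝ᵥ w (i : ℕ) := by
      have hWt : Wf t = w (i : ℕ) := by
        funext s'
        rw [hWf]
        simp only [hte, if_pos, htdiv]
        try rw [htdiv]
      rw [hWt]
    have hs1 : (Qmat d Dhid 1 *ᵥ H t) ⬝ᵥ (Kmat d Dhid M *ᵥ H t)
        = x (i : ℕ) ⬝ᵥ w (i : ℕ) := by rw [score 1 t, hu]; ring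
    have hs2 : (Qmat d Dhid (-1) *ᵥ H t) ⬝ᵥ (Kmat d Dhid M *ᵥ H t)
        = -(x (i : ℕ) ⬝ᵥ w (i : ℕ)) := by rw [score (-1) t, hu]; ring
    have hsum1 : (∑ j ∈ Finset.Iic t,
        relu ((Qmat d Dhid 1 *ᵥ H t) ⬝ᵥ (Kmat d Dhid M *ᵥ H j))
          * (1 * (((j : ℕ) : ℝ) + 1)))
        = relu (x (i : ℕ) ⬝ᵥ w (i : ℕ)) * (((t : ℕ) : ℝ) + 1) := by
      rw [Finset.sum_eq_single_of_mem t (Finset.mem_Iic.2 le_rfl)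
        (fun j hj hjt => by rw [hrelu0 1 (Or.inl rfl) j hj hjt, zero_mul])]
      rw [hs1, one_mul]
    have hsum2 : (∑ j ∈ Finset.Iic t,
        relu ((Qmat d Dhid (-1) *ᵥ H t) ⬝ᵥ (Kmat d Dhid M *ᵥ H j))
          * (-1 * (((j : ℕ) : ℝ) + 1)))
        = relu (-(x (i : ℕ) ⬝ᵥ w (i : ℕ))) * (-(((t : ℕ) : ℝ) + 1)) := by
      rw [Finset.sum_eq_single_of_mem t (Finset.mem_Iic.2 le_rfl)
        (fun j hj hjt => by rw [hrelu0 (-1) (Or.inr rfl) j hj hjt, zero_mul])]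
      rw [hs2]; ring
    simp only [hVal, if_pos hr]
    rw [hsum1, hsum2]
    rw [hHdef, gdFormat_d t r hr, if_pos hte, gdFormat_d t r hr, if_pos hte, htdiv]
    have hT : (0 : ℝ) < ((t : ℕ) : ℝ) + 1 := by positivity
    have hrel := relu_sub_relu_neg (x (i : ℕ) ⬝ᵥ w (i : ℕ))
    field_simp
    linear_combination hrel
  · simp only [hVal, if_neg hr, mul_zero, Finset.sum_const_zero, add_zero]
    exact gdFormat_congr_yhat t r hr


end
end

section
/- Let Φ* be an L-layer leaky-ReLU MLP representation with hidden dimension D, and suppose D_hid ≥ max{2D, D + d + 10}. Then there exists a decoder transformer with L+1 layers and at most 5 heads per attention layer that exactly implements Φ* token-wise: for every N and every input H ∈ ℝ^{D_hid×2N} of the supervised input format, TF(H) has column 2i−1 equal to [Φ*(x_i); 0; p̃^x_i] and column 2i equal to [0_D; y_i; p̃^y_i] for all i ∈ [N], where p̃^x_i, p̃^y_i differ from p^x_i, p^y_i only in the dimension of their zero paddings. -/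
open scoped BigOperators Matrix

noncomputable section

namespace TFM

lemma relu_nonpos {t : ℝ} (h : t ≤ 0) : relu t = 0 := max_eq_right h
lemma relu_nonneg {t : ℝ} (h : 0 ≤ t) : relu t = t := max_eq_left h

lemma lrelu_eq (ρ v : ℝ) (hρ : ρ ≤ 1) : v + (1-ρ) * relu (-v) = lrelu ρ v := by
  rcases le_total v 0 with h | h
  · rw [relu_nonneg (by linarith), lrelu, max_eq_right (by nlinarith)]; ring
  · rw [relu_nonpos (by linarith), lrelu, max_eq_left (by nlinarith)]; ring

/-- single-entry matrix, with ℕ indices. -/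
def sm (Dhid : ℕ) (a0 b0 : ℕ) : Matrix (Fin Dhid) (Fin Dhid) ℝ :=
  Matrix.of fun a b => if (a:ℕ) = a0 ∧ (b:ℕ) = b0 then 1 else 0

lemma sm_mulVec {Dhid : ℕ} (a0 b0 : ℕ) (hb : b0 < Dhid) (v : Fin Dhid → ℝ) (a : Fin Dhid) :
    (sm Dhid a0 b0 *ᵥ v) a = if (a:ℕ) = a0 then v ⟨b0, hb⟩ else 0 := by
  simp only [sm, Matrix.mulVec, dotProduct, Matrix.of_apply]
  by_cases ha : (a:ℕ) = a0
  · simp only [ha, true_and, if_pos]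
    rw [Finset.sum_eq_single ⟨b0, hb⟩]
    · simp
    · intro b _ hbne; rw [if_neg, zero_mul]; simpa [Fin.ext_iff] using hbne
    · simp
  · simp [ha]

lemma sm_mulVec_oob {Dhid : ℕ} (a0 b0 : ℕ) (hb : Dhid ≤ b0) (v : Fin Dhid → ℝ) (a : Fin Dhid) :
    (sm Dhid a0 b0 *ᵥ v) a = 0 := by
  simp only [sm, Matrix.mulVec, dotProduct, Matrix.of_apply]
  apply Finset.sum_eq_zero; intro b _
  rw [if_neg, zero_mul]; rintro ⟨-, h⟩; omega

/-- projection onto coordinates `< m`. -/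
def projLt (Dhid m : ℕ) : Matrix (Fin Dhid) (Fin Dhid) ℝ :=
  Matrix.of fun a b => if a = b ∧ (a:ℕ) < m then 1 else 0

lemma projLt_mulVec {Dhid m : ℕ} (v : Fin Dhid → ℝ) (a : Fin Dhid) :
    (projLt Dhid m *ᵥ v) a = if (a:ℕ) < m then v a else 0 := by
  simp only [projLt, Matrix.mulVec, dotProduct, Matrix.of_apply]
  by_cases ha : (a:ℕ) < m
  · simp only [ha, and_true]
    rw [Finset.sum_eq_single a] <;> simp +contextual [eq_comm]
  · simp [ha]

/-- embed a `D × d` matrix into the top-left corner of a `Dhid × Dhid` matrix. -/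
def inj (Dhid : ℕ) {D d : ℕ} (B : Matrix (Fin D) (Fin d) ℝ) : Matrix (Fin Dhid) (Fin Dhid) ℝ :=
  Matrix.of fun a b =>
    if ha : (a:ℕ) < D then (if hb : (b:ℕ) < d then B ⟨a, ha⟩ ⟨b, hb⟩ else 0) else 0

lemma inj_mulVec {Dhid D d : ℕ} (hd : d ≤ Dhid) (B : Matrix (Fin D) (Fin d) ℝ)
    (v : Fin Dhid → ℝ) (a : Fin Dhid) :
    (inj Dhid B *ᵥ v) a =
      if ha : (a:ℕ) < D then (B *ᵥ fun b : Fin d => v ⟨b, lt_of_lt_of_le b.2 hd⟩) ⟨a, ha⟩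
      else 0 := by
  simp only [inj, Matrix.mulVec, dotProduct, Matrix.of_apply]
  by_cases ha : (a:ℕ) < D
  · rw [dif_pos ha]
    set g : ℕ → ℝ := fun k => if hk : k < d then B ⟨a, ha⟩ ⟨k, hk⟩ * v ⟨k, lt_of_lt_of_le hk hd⟩ else 0 with hg
    have h1 : ∀ b : Fin Dhid, (if hb : (b:ℕ) < d then B ⟨(a:ℕ), ha⟩ ⟨(b:ℕ), hb⟩ else 0) * v b = g (b:ℕ) := by
      intro b; by_cases hb : (b:ℕ) < d
      · rw [dif_pos hb, hg]; simp only [dif_pos hb]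
      · rw [dif_neg hb, hg]; simp only [dif_neg hb, zero_mul]
    calc (∑ b : Fin Dhid, (fun j => if ha : (a:ℕ) < D then if hb : (j:ℕ) < d then B ⟨(a:ℕ), ha⟩ ⟨(j:ℕ), hb⟩ else 0 else 0) b * v b)
        = ∑ b : Fin Dhid, g (b:ℕ) := by
          refine Finset.sum_congr rfl fun b _ => ?_
          simp only [dif_pos ha]; exact h1 b
      _ = ∑ k ∈ Finset.range Dhid, g k := Fin.sum_univ_eq_sum_range g Dhid
      _ = ∑ k ∈ Finset.range d, g k := by
          refine (Finset.sum_subset (Finset.range_subset_range.2 hd) fun k _ hk => ?_).symm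
          rw [hg]; simp only [Finset.mem_range, not_lt] at hk
          exact dif_neg (by omega)
      _ = ∑ b : Fin d, g (b:ℕ) := (Fin.sum_univ_eq_sum_range g d).symm
      _ = ∑ b : Fin d, B ⟨(a:ℕ), ha⟩ b * v ⟨(b:ℕ), lt_of_lt_of_le b.2 hd⟩ := by
          refine Finset.sum_congr rfl fun b _ => ?_
          rw [hg]; simp only [dif_pos b.2, Fin.eta]
      _ = _ := rfl
  · simp [ha]

end TFM

namespace TFM2
open TFM

lemma tailVec_lo {Dhid m : ℕ} (a : Fin m → ℝ) (r : Fin Dhid) (h : (r:ℕ) + m < Dhid) :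
    tailVec Dhid a r = 0 := dif_neg (by omega)

lemma tailVec_hi {Dhid m : ℕ} (a : Fin m → ℝ) (r : Fin Dhid) (h : Dhid ≤ (r:ℕ) + m) :
    tailVec Dhid a r = a ⟨(r:ℕ)+m-Dhid, by omega⟩ := by
  unfold tailVec
  rw [dif_pos h, dif_pos (by omega : (r:ℕ)+m-Dhid < m)]

lemma posX_lo {Dhid : ℕ} (i : ℕ) (r : Fin Dhid) (h : (r:ℕ) + 8 < Dhid) :
    posXvec Dhid i r = 0 := tailVec_lo _ _ h

lemma posY_lo {Dhid : ℕ} (i : ℕ) (r : Fin Dhid) (h : (r:ℕ) + 8 < Dhid) :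
    posYvec Dhid i r = 0 := tailVec_lo _ _ h

def PosTail {Dhid M : ℕ} (H : Fin M → Fin Dhid → ℝ) : Prop :=
  ∀ (t : Fin M) (r : Fin Dhid), Dhid - 8 ≤ (r:ℕ) →
    H t r = if (t:ℕ) % 2 = 0 then posXvec Dhid ((t:ℕ)/2+1) r
            else posYvec Dhid ((t:ℕ)/2+1) r

variable {Dhid M : ℕ} {H : Fin M → Fin Dhid → ℝ}

lemma fin8eq {x y : ℕ} (hx : x < 8) (hy : y < 8) (h : x = y) :
    (⟨x, hx⟩ : Fin 8) = ⟨y, hy⟩ := by subst h; rfl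

lemma tail_entry {Dhid : ℕ} (h8 : 8 ≤ Dhid) (a : Fin 8 → ℝ) (k : ℕ) (hk : k < 8) :
    tailVec Dhid a ⟨Dhid-8+k, by omega⟩ = a ⟨k, hk⟩ := by
  rw [tailVec_hi a ⟨Dhid-8+k, by omega⟩ (show Dhid ≤ Dhid-8+k+8 by omega)]
  exact congrArg a (Fin.ext (show Dhid-8+k+8-Dhid = k by omega))

lemma pv_gen (h8 : 8 ≤ Dhid) (hH : PosTail H) (t : Fin M) (k : ℕ) (hk : k < 8) :
    H t ⟨Dhid-8+k, by omega⟩ =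
      if (t:ℕ) % 2 = 0 then
        (![1, 2*(((t:ℕ)/2+1:ℕ):ℝ)-1, (2*(((t:ℕ)/2+1:ℕ):ℝ)-1)^2, (2*(((t:ℕ)/2+1:ℕ):ℝ)-1)^3,
           (((t:ℕ)/2+1:ℕ):ℝ), (((t:ℕ)/2+1:ℕ):ℝ)^2, 1, (((t:ℕ)/2+1:ℕ):ℝ)] : Fin 8 → ℝ) ⟨k, hk⟩
      else
        (![1, 2*(((t:ℕ)/2+1:ℕ):ℝ), (2*(((t:ℕ)/2+1:ℕ):ℝ))^2, (2*(((t:ℕ)/2+1:ℕ):ℝ))^3,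
           (((t:ℕ)/2+1:ℕ):ℝ), (((t:ℕ)/2+1:ℕ):ℝ)^2, 0, 0] : Fin 8 → ℝ) ⟨k, hk⟩ := by
  rw [hH t ⟨Dhid-8+k, by omega⟩ (show Dhid - 8 ≤ Dhid-8+k by omega)]
  by_cases hp : (t:ℕ) % 2 = 0
  · rw [if_pos hp, if_pos hp, posXvec, tail_entry h8 _ k hk]
  · rw [if_neg hp, if_neg hp, posYvec, tail_entry h8 _ k hk]

lemma pv1 (h8 : 8 ≤ Dhid) (hH : PosTail H) (t : Fin M) :
    H t ⟨Dhid-8, by omega⟩ = 1 := by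
  rw [show (⟨Dhid-8, by omega⟩ : Fin Dhid) = ⟨Dhid-8+0, by omega⟩ from Fin.ext (show Dhid-8 = Dhid-8+0 by omega)]
  rw [pv_gen h8 hH t 0 (by omega)]
  by_cases hp : (t:ℕ) % 2 = 0 <;> simp [hp]

lemma pvn (h8 : 8 ≤ Dhid) (hH : PosTail H) (t : Fin M) :
    H t ⟨Dhid-7, by omega⟩ = (t:ℕ)+1 := by
  rw [show (⟨Dhid-7, by omega⟩ : Fin Dhid) = ⟨Dhid-8+1, by omega⟩ from Fin.ext (show Dhid-7 = Dhid-8+1 by omega)]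
  rw [pv_gen h8 hH t 1 (by omega)]
  obtain ⟨s, hs | hs⟩ : ∃ s, (t:ℕ) = 2*s ∨ (t:ℕ) = 2*s+1 := ⟨(t:ℕ)/2, by omega⟩
  · rw [if_pos (by omega)]
    show 2*(((t:ℕ)/2+1 : ℕ):ℝ)-1 = _
    rw [show (t:ℕ)/2 = s by omega, hs]; push_cast; ring
  · rw [if_neg (by omega)]
    show 2*(((t:ℕ)/2+1 : ℕ):ℝ) = _
    rw [show (t:ℕ)/2 = s by omega, hs]; push_cast; ring

lemma pvn2 (h8 : 8 ≤ Dhid) (hH : PosTail H) (t : Fin M) :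
    H t ⟨Dhid-6, by omega⟩ = (((t:ℕ):ℝ)+1)^2 := by
  rw [show (⟨Dhid-6, by omega⟩ : Fin Dhid) = ⟨Dhid-8+2, by omega⟩ from Fin.ext (show Dhid-6 = Dhid-8+2 by omega)]
  rw [pv_gen h8 hH t 2 (by omega)]
  obtain ⟨s, hs | hs⟩ : ∃ s, (t:ℕ) = 2*s ∨ (t:ℕ) = 2*s+1 := ⟨(t:ℕ)/2, by omega⟩
  · rw [if_pos (by omega)]
    show (2*(((t:ℕ)/2+1 : ℕ):ℝ)-1)^2 = _
    rw [show (t:ℕ)/2 = s by omega, hs]; push_cast; ring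
  · rw [if_neg (by omega)]
    show (2*(((t:ℕ)/2+1 : ℕ):ℝ))^2 = _
    rw [show (t:ℕ)/2 = s by omega, hs]; push_cast; ring

lemma pv6 (h8 : 8 ≤ Dhid) (hH : PosTail H) (t : Fin M) :
    H t ⟨Dhid-2, by omega⟩ = if (t:ℕ) % 2 = 0 then 1 else 0 := by
  rw [show (⟨Dhid-2, by omega⟩ : Fin Dhid) = ⟨Dhid-8+6, by omega⟩ from Fin.ext (show Dhid-2 = Dhid-8+6 by omega)]
  rw [pv_gen h8 hH t 6 (by omega)]
  by_cases hp : (t:ℕ) % 2 = 0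
  · rw [if_pos hp, if_pos hp]; rfl
  · rw [if_neg hp, if_neg hp]; rfl

lemma pv7 (h8 : 8 ≤ Dhid) (hH : PosTail H) (t : Fin M) :
    H t ⟨Dhid-1, by omega⟩ = if (t:ℕ) % 2 = 0 then (((t:ℕ)/2+1 : ℕ):ℝ) else 0 := by
  rw [show (⟨Dhid-1, by omega⟩ : Fin Dhid) = ⟨Dhid-8+7, by omega⟩ from Fin.ext (show Dhid-1 = Dhid-8+7 by omega)]
  rw [pv_gen h8 hH t 7 (by omega)]
  by_cases hp : (t:ℕ) % 2 = 0
  · rw [if_pos hp, if_pos hp]; rfl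
  · rw [if_neg hp, if_neg hp]; rfl

end TFM2

namespace TFM3
open TFM TFM2

def Kplain (Dhid : ℕ) : Matrix (Fin Dhid) (Fin Dhid) ℝ :=
  sm Dhid (Dhid-7) (Dhid-7) + sm Dhid (Dhid-7) (Dhid-8) - sm Dhid (Dhid-6) (Dhid-8)

def Kgate (Dhid : ℕ) : Matrix (Fin Dhid) (Fin Dhid) ℝ :=
  (2:ℝ) • sm Dhid (Dhid-7) (Dhid-1) - sm Dhid (Dhid-6) (Dhid-2)

lemma dot_sm {Dhid : ℕ} (a0 b0 : ℕ) (ha : a0 < Dhid) (hb : b0 < Dhid)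
    (u v : Fin Dhid → ℝ) :
    u ⬝ᵥ (sm Dhid a0 b0 *ᵥ v) = u ⟨a0,ha⟩ * v ⟨b0,hb⟩ := by
  simp only [dotProduct]
  rw [Finset.sum_eq_single ⟨a0,ha⟩]
  · rw [sm_mulVec _ _ hb, if_pos rfl]
  · intro b _ hbne; rw [sm_mulVec _ _ hb, if_neg, mul_zero]
    simpa [Fin.ext_iff] using hbne
  · simp

variable {Dhid M : ℕ} {H : Fin M → Fin Dhid → ℝ}

lemma dot_Kplain (h8 : 8 ≤ Dhid) (hH : PosTail H) (t j : Fin M) :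
    H t ⬝ᵥ (Kplain Dhid *ᵥ H j)
      = (((t:ℕ):ℝ)+1) * (((j:ℕ):ℝ) + 1 - (t:ℕ)) := by
  unfold Kplain
  rw [Matrix.sub_mulVec, Matrix.add_mulVec, dotProduct_sub, dotProduct_add,
    dot_sm _ _ (by omega) (by omega), dot_sm _ _ (by omega) (by omega),
    dot_sm _ _ (by omega) (by omega),
    pvn h8 hH t, pvn h8 hH j, pv1 h8 hH j, pvn2 h8 hH t]
  ring

lemma dot_Kgate (h8 : 8 ≤ Dhid) (hH : PosTail H) (t j : Fin M) :
    H t ⬝ᵥ (Kgate Dhid *ᵥ H j)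
      = if (j:ℕ) % 2 = 0 then (((t:ℕ):ℝ)+1) * (((j:ℕ):ℝ) + 1 - (t:ℕ)) else 0 := by
  unfold Kgate
  rw [Matrix.sub_mulVec, Matrix.smul_mulVec, dotProduct_sub,
    dotProduct_smul, smul_eq_mul, dot_sm _ _ (by omega) (by omega),
    dot_sm _ _ (by omega) (by omega),
    pvn h8 hH t, pv7 h8 hH j, pv6 h8 hH j, pvn2 h8 hH t]
  by_cases hp : (j:ℕ) % 2 = 0
  · rw [if_pos hp, if_pos hp, if_pos hp]
    obtain ⟨s, hs⟩ : ∃ s, (j:ℕ) = 2*s := ⟨(j:ℕ)/2, by omega⟩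
    rw [show (j:ℕ)/2 = s by omega, hs]
    push_cast; ring
  · rw [if_neg hp, if_neg hp, if_neg hp]; ring

lemma attn_plain (h8 : 8 ≤ Dhid) (V : Matrix (Fin Dhid) (Fin Dhid) ℝ)
    (hH : PosTail H) (t : Fin M) :
    attnLayer ![(⟨1, Kplain Dhid, V⟩ : AttnHead Dhid)] H t = H t + V *ᵥ H t := by
  unfold attnLayer
  rw [Fin.sum_univ_one]
  congr 1
  have key : ∀ j ∈ Finset.Iic t,
      relu (((![(⟨1, Kplain Dhid, V⟩ : AttnHead Dhid)] 0).Q *ᵥ H t) ⬝ᵥ ((![(⟨1, Kplain Dhid, V⟩ : AttnHead Dhid)] 0).K *ᵥ H j))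
        • ((![(⟨1, Kplain Dhid, V⟩ : AttnHead Dhid)] 0).V *ᵥ H j)
      = if j = t then ((((t:ℕ):ℝ)+1) • (V *ᵥ H t)) else 0 := by
    intro j hj
    show relu ((1 *ᵥ H t) ⬝ᵥ (Kplain Dhid *ᵥ H j)) • (V *ᵥ H j) = _
    rw [Matrix.one_mulVec, dot_Kplain h8 hH t j]
    by_cases hjt : j = t
    · subst hjt
      rw [if_pos rfl, relu_nonneg (by nlinarith [Nat.cast_nonneg (α := ℝ) (j:ℕ)])]
      congr 1; ring
    · rw [if_neg hjt, relu_nonpos, zero_smul]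
      have hlt : (j:ℕ) < (t:ℕ) := lt_of_le_of_ne (Fin.le_def.mp (Finset.mem_Iic.mp hj)) (by simpa [Fin.ext_iff] using hjt)
      have h1 : ((j:ℕ):ℝ) + 1 - (t:ℕ) ≤ 0 := by
        have : ((j:ℕ):ℝ) + 1 ≤ (t:ℕ) := by exact_mod_cast hlt
        linarith
      nlinarith [Nat.cast_nonneg (α := ℝ) (t:ℕ)]
  rw [Finset.sum_congr rfl key, Finset.sum_ite_eq' (Finset.Iic t) t
    (fun _ => (((t:ℕ):ℝ)+1) • (V *ᵥ H t)), if_pos (Finset.mem_Iic.mpr le_rfl), smul_smul]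
  rw [show (1 / (((t:ℕ):ℝ)+1)) * ((((t:ℕ):ℝ)+1)) = 1 by
    field_simp]
  rw [one_smul]

lemma attn_gate (h8 : 8 ≤ Dhid) (V : Matrix (Fin Dhid) (Fin Dhid) ℝ)
    (hH : PosTail H) (t : Fin M) :
    attnLayer ![(⟨1, Kgate Dhid, V⟩ : AttnHead Dhid)] H t
      = H t + if (t:ℕ) % 2 = 0 then V *ᵥ H t else 0 := by
  unfold attnLayer
  rw [Fin.sum_univ_one]
  congr 1
  have key : ∀ j ∈ Finset.Iic t,
      relu (((![(⟨1, Kgate Dhid, V⟩ : AttnHead Dhid)] 0).Q *ᵥ H t) ⬝ᵥ ((![(⟨1, Kgate Dhid, V⟩ : AttnHead Dhid)] 0).K *ᵥ H j))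
        • ((![(⟨1, Kgate Dhid, V⟩ : AttnHead Dhid)] 0).V *ᵥ H j)
      = if j = t ∧ (t:ℕ) % 2 = 0 then ((((t:ℕ):ℝ)+1) • (V *ᵥ H t)) else 0 := by
    intro j hj
    show relu ((1 *ᵥ H t) ⬝ᵥ (Kgate Dhid *ᵥ H j)) • (V *ᵥ H j) = _
    rw [Matrix.one_mulVec, dot_Kgate h8 hH t j]
    by_cases hje : (j:ℕ) % 2 = 0
    · rw [if_pos hje]
      by_cases hjt : j = t
      · subst hjt
        rw [if_pos ⟨rfl, hje⟩, relu_nonneg (by nlinarith [Nat.cast_nonneg (α := ℝ) (j:ℕ)])]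
        congr 1; ring
      · rw [if_neg (by tauto), relu_nonpos, zero_smul]
        have hlt : (j:ℕ) < (t:ℕ) := lt_of_le_of_ne (Fin.le_def.mp (Finset.mem_Iic.mp hj)) (by simpa [Fin.ext_iff] using hjt)
        have h1 : ((j:ℕ):ℝ) + 1 ≤ (t:ℕ) := by exact_mod_cast hlt
        nlinarith [Nat.cast_nonneg (α := ℝ) (t:ℕ)]
    · rw [if_neg hje, relu_nonpos le_rfl, zero_smul, if_neg]
      rintro ⟨rfl, hte⟩; exact hje hte
  rw [Finset.sum_congr rfl key]
  by_cases hte : (t:ℕ) % 2 = 0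
  · rw [if_pos hte]
    have : ∀ j ∈ Finset.Iic t, (if j = t ∧ (t:ℕ) % 2 = 0 then ((((t:ℕ):ℝ)+1) • (V *ᵥ H t)) else 0)
        = if j = t then ((((t:ℕ):ℝ)+1) • (V *ᵥ H t)) else 0 := by
      intro j _; by_cases hjt : j = t <;> simp [hjt, hte]
    rw [Finset.sum_congr rfl this, Finset.sum_ite_eq' (Finset.Iic t) t
      (fun _ => (((t:ℕ):ℝ)+1) • (V *ᵥ H t)), if_pos (Finset.mem_Iic.mpr le_rfl), smul_smul]
    rw [show (1 / (((t:ℕ):ℝ)+1)) * ((((t:ℕ):ℝ)+1)) = 1 by field_simp]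
    rw [one_smul]
  · rw [if_neg hte]
    have : ∀ j ∈ Finset.Iic t, (if j = t ∧ (t:ℕ) % 2 = 0 then ((((t:ℕ):ℝ)+1) • (V *ᵥ H t)) else 0) = 0 := by
      intro j _; rw [if_neg]; rintro ⟨-, h⟩; exact hte h
    rw [Finset.sum_congr rfl this, Finset.sum_const_zero, smul_zero]

end TFM3

namespace TFM4
open TFM TFM2 TFM3

lemma mlp_eval {Dhid M : ℕ} (ρ : ℝ) (D : ℕ) (H : Fin M → Fin Dhid → ℝ) (t : Fin M) (r : Fin Dhid) :
    mlpLayer (-(projLt Dhid D)) ((1-ρ) • projLt Dhid D) H t r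
      = H t r + if (r:ℕ) < D then (1-ρ) * relu (-(H t r)) else 0 := by
  unfold mlpLayer
  simp only [Pi.add_apply]
  congr 1
  rw [Matrix.smul_mulVec, Pi.smul_apply, smul_eq_mul, projLt_mulVec]
  by_cases hr : (r:ℕ) < D
  · rw [if_pos hr, if_pos hr]
    congr 2
    show relu (((-(projLt Dhid D)) *ᵥ H t) r) = _
    rw [Matrix.neg_mulVec, Pi.neg_apply, projLt_mulVec, if_pos hr]
  · rw [if_neg hr, if_neg hr, mul_zero]

def layer0 (Dhid d D : ℕ) : TFLayer Dhid :=
  ⟨1, ![⟨1, Kplain Dhid, sm Dhid D d - sm Dhid d d⟩], 0, 0⟩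

def layer1 (Dhid : ℕ) (ρ : ℝ) {D d : ℕ} (B1 : Matrix (Fin D) (Fin d) ℝ) : TFLayer Dhid :=
  ⟨1, ![⟨1, Kgate Dhid, inj Dhid B1 - projLt Dhid d⟩], -(projLt Dhid D), (1-ρ) • projLt Dhid D⟩

def layerB (Dhid : ℕ) (ρ : ℝ) {D : ℕ} (B : Matrix (Fin D) (Fin D) ℝ) : TFLayer Dhid :=
  ⟨1, ![⟨1, Kplain Dhid, inj Dhid B - projLt Dhid D⟩], -(projLt Dhid D), (1-ρ) • projLt Dhid D⟩

def st1 (Dhid d D N : ℕ) (x : ℕ → Fin d → ℝ) (y : ℕ → ℝ) : Fin (2*N) → Fin Dhid → ℝ := fun t r =>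
  if (t:ℕ) % 2 = 0 then
    (if h : (r:ℕ) < d then x ((t:ℕ)/2) ⟨(r:ℕ), h⟩
     else if (r:ℕ) = d then 0 else posXvec Dhid ((t:ℕ)/2+1) r)
  else
    (if (r:ℕ) = D then y ((t:ℕ)/2)
     else if (r:ℕ) ≤ d then 0 else posYvec Dhid ((t:ℕ)/2+1) r)

lemma posTail_supFormat {Dhid D N : ℕ} (h : D+9 ≤ Dhid) (zx zy : ℕ → Fin D → ℝ) (y : ℕ → ℝ) :
    PosTail (supFormat Dhid D N zx zy y) := by
  intro t r hr
  unfold supFormat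
  rw [dif_neg (by omega), if_neg (by omega)]

lemma posTail_st1 {Dhid d D N : ℕ} (hd : d+9 ≤ Dhid) (hD : D+9 ≤ Dhid)
    (x : ℕ → Fin d → ℝ) (y : ℕ → ℝ) : PosTail (st1 Dhid d D N x y) := by
  intro t r hr
  unfold st1
  by_cases hp : (t:ℕ) % 2 = 0
  · rw [if_pos hp, if_pos hp, dif_neg (by omega), if_neg (by omega)]
  · rw [if_neg hp, if_neg hp, if_neg (by omega), if_neg (by omega)]

lemma stage0 {Dhid d D N : ℕ} (x : ℕ → Fin d → ℝ) (y : ℕ → ℝ)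
    (hd : d+10 ≤ Dhid) (hD : D+10 ≤ Dhid) :
    TFLayer.apply (layer0 Dhid d D) (supInput Dhid d N x y) = st1 Dhid d D N x y := by
  have h8 : 8 ≤ Dhid := by omega
  have hPos : PosTail (supInput Dhid d N x y) :=
    posTail_supFormat (by omega) x (fun _ _ => 0) y
  funext t r
  show mlpLayer 0 0 (attnLayer ![(⟨1, Kplain Dhid, sm Dhid D d - sm Dhid d d⟩ : AttnHead Dhid)]
    (supInput Dhid d N x y)) t r = _
  unfold mlpLayer
  rw [Matrix.zero_mulVec]
  rw [add_zero, attn_plain h8 (sm Dhid D d - sm Dhid d d) hPos t]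
  simp only [Pi.add_apply]
  rw [Matrix.sub_mulVec, Pi.sub_apply, sm_mulVec _ _ (by omega), sm_mulVec _ _ (by omega)]
  have hvd : supInput Dhid d N x y t ⟨d, by omega⟩
      = if (t:ℕ) % 2 = 0 then 0 else y ((t:ℕ)/2) := by
    unfold supInput supFormat
    rw [dif_neg (show ¬(d < d) by omega), if_pos rfl]
  rw [hvd]
  unfold supInput supFormat st1
  by_cases hp : (t:ℕ) % 2 = 0
  · simp [hp]
  · simp only [hp, if_false, ite_false]
    by_cases hrd : (r:ℕ) < d
    · rw [dif_pos hrd]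
      by_cases hrD : (r:ℕ) = D
      · rw [if_pos hrD, if_pos hrD, if_neg (show ¬(r:ℕ) = d by omega)]; ring
      · rw [if_neg hrD, if_neg hrD, if_neg (show ¬(r:ℕ) = d by omega), if_pos (show (r:ℕ) ≤ d by omega)]; ring
    · rw [dif_neg hrd]
      by_cases hre : (r:ℕ) = d
      · rw [if_pos hre, if_pos hre]
        by_cases hdD : (r:ℕ) = D
        · rw [if_pos hdD, if_pos hdD]; ring
        · rw [if_neg hdD, if_neg hdD, if_pos (by omega)]; ring
      · rw [if_neg hre, if_neg hre]
        by_cases hdD : (r:ℕ) = D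
        · rw [if_pos hdD, if_pos hdD, posY_lo _ _ (by omega)]; ring
        · rw [if_neg hdD, if_neg hdD, if_neg (by omega)]; ring

lemma stageB {Dhid D N : ℕ} (ρ : ℝ) (hρ : ρ ≤ 1) (B : Matrix (Fin D) (Fin D) ℝ)
    (u : ℕ → Fin D → ℝ) (y : ℕ → ℝ) (h : D+10 ≤ Dhid) :
    TFLayer.apply (layerB Dhid ρ B) (supFormat Dhid D N u (fun _ _ => 0) y)
      = supFormat Dhid D N (fun i => lreluV ρ (B *ᵥ u i)) (fun _ _ => 0) y := by
  have h8 : 8 ≤ Dhid := by omega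
  have hPos : PosTail (supFormat Dhid D N u (fun _ _ => 0) y) :=
    posTail_supFormat (by omega) _ _ _
  funext t r
  show mlpLayer (-(projLt Dhid D)) ((1-ρ) • projLt Dhid D)
    (attnLayer ![(⟨1, Kplain Dhid, inj Dhid B - projLt Dhid D⟩ : AttnHead Dhid)]
      (supFormat Dhid D N u (fun _ _ => 0) y)) t r = _
  rw [mlp_eval, attn_plain h8 _ hPos t]
  simp only [Pi.add_apply, Pi.sub_apply]
  rw [Matrix.sub_mulVec, Pi.sub_apply, inj_mulVec (by omega) B, projLt_mulVec]
  have hut : (fun b : Fin D => supFormat Dhid D N u (fun _ _ => 0) y t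
        ⟨(b:ℕ), lt_of_lt_of_le b.2 (by omega)⟩)
      = if (t:ℕ) % 2 = 0 then u ((t:ℕ)/2) else 0 := by
    funext b
    unfold supFormat
    rw [dif_pos (show ((⟨(b:ℕ), lt_of_lt_of_le b.2 (by omega)⟩ : Fin Dhid):ℕ) < D from b.2)]
    by_cases hp : (t:ℕ) % 2 = 0
    · rw [if_pos hp, if_pos hp]
    · rw [if_neg hp, if_neg hp]; rfl
  rw [hut]
  by_cases hp : (t:ℕ) % 2 = 0
  · rw [if_pos hp]
    by_cases hrD : (r:ℕ) < D
    · rw [dif_pos hrD, if_pos hrD, if_pos hrD]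
      have hv : supFormat Dhid D N u (fun _ _ => 0) y t r = u ((t:ℕ)/2) ⟨(r:ℕ), hrD⟩ := by
        unfold supFormat; rw [dif_pos hrD, if_pos hp]
      rw [hv]
      rw [show u ((t:ℕ)/2) ⟨(r:ℕ), hrD⟩ + ((B *ᵥ u ((t:ℕ)/2)) ⟨(r:ℕ), hrD⟩
          - u ((t:ℕ)/2) ⟨(r:ℕ), hrD⟩) = (B *ᵥ u ((t:ℕ)/2)) ⟨(r:ℕ), hrD⟩ from by ring]
      have hR : supFormat Dhid D N (fun i => lreluV ρ (B *ᵥ u i)) (fun _ _ => 0) y t r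
          = lreluV ρ (B *ᵥ u ((t:ℕ)/2)) ⟨(r:ℕ), hrD⟩ := by
        unfold supFormat; rw [dif_pos hrD, if_pos hp]
      rw [hR]
      exact lrelu_eq ρ _ hρ
    · rw [dif_neg hrD, if_neg hrD, if_neg hrD]
      rw [show supFormat Dhid D N u (fun _ _ => 0) y t r + (0 - 0) + 0
          = supFormat Dhid D N u (fun _ _ => 0) y t r from by ring]
      unfold supFormat
      rw [dif_neg hrD, dif_neg hrD]
  · rw [if_neg hp]
    by_cases hrD : (r:ℕ) < D
    · rw [dif_pos hrD, if_pos hrD, if_pos hrD]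
      have hv : supFormat Dhid D N u (fun _ _ => 0) y t r = 0 := by
        unfold supFormat; rw [dif_pos hrD, if_neg hp]
      have hR : supFormat Dhid D N (fun i => lreluV ρ (B *ᵥ u i)) (fun _ _ => 0) y t r = 0 := by
        unfold supFormat; rw [dif_pos hrD, if_neg hp]
      rw [hv, hR, Matrix.mulVec_zero]
      simp [relu]
    · rw [dif_neg hrD, if_neg hrD, if_neg hrD]
      rw [show supFormat Dhid D N u (fun _ _ => 0) y t r + (0 - 0) + 0
          = supFormat Dhid D N u (fun _ _ => 0) y t r from by ring]
      unfold supFormat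
      rw [dif_neg hrD, dif_neg hrD]

lemma stage1 {Dhid d D N : ℕ} (ρ : ℝ) (hρ : ρ ≤ 1) (B1 : Matrix (Fin D) (Fin d) ℝ)
    (x : ℕ → Fin d → ℝ) (y : ℕ → ℝ) (h : D + d + 10 ≤ Dhid) :
    TFLayer.apply (layer1 Dhid ρ B1) (st1 Dhid d D N x y)
      = supFormat Dhid D N (fun i => lreluV ρ (B1 *ᵥ x i)) (fun _ _ => 0) y := by
  have h8 : 8 ≤ Dhid := by omega
  have hPos : PosTail (st1 Dhid d D N x y) := posTail_st1 (by omega) (by omega) x y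
  funext t r
  show mlpLayer (-(projLt Dhid D)) ((1-ρ) • projLt Dhid D)
    (attnLayer ![(⟨1, Kgate Dhid, inj Dhid B1 - projLt Dhid d⟩ : AttnHead Dhid)]
      (st1 Dhid d D N x y)) t r = _
  rw [mlp_eval, attn_gate h8 _ hPos t]
  by_cases hp : (t:ℕ) % 2 = 0
  · rw [if_pos hp]
    simp only [Pi.add_apply, Pi.sub_apply]
    rw [Matrix.sub_mulVec, Pi.sub_apply, inj_mulVec (by omega) B1, projLt_mulVec]
    have hut : (fun b : Fin d => st1 Dhid d D N x y t
          ⟨(b:ℕ), lt_of_lt_of_le b.2 (by omega)⟩) = x ((t:ℕ)/2) := by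
      funext b
      unfold st1
      rw [if_pos hp, dif_pos (show ((⟨(b:ℕ), lt_of_lt_of_le b.2 (by omega)⟩ : Fin Dhid):ℕ) < d from b.2)]
    rw [hut]
    by_cases hrD : (r:ℕ) < D
    · rw [dif_pos hrD, if_pos hrD]
      have hR : supFormat Dhid D N (fun i => lreluV ρ (B1 *ᵥ x i)) (fun _ _ => 0) y t r
          = lreluV ρ (B1 *ᵥ x ((t:ℕ)/2)) ⟨(r:ℕ), hrD⟩ := by
        unfold supFormat; rw [dif_pos hrD, if_pos hp]
      rw [hR]
      by_cases hrd : (r:ℕ) < d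
      · have hv : st1 Dhid d D N x y t r = x ((t:ℕ)/2) ⟨(r:ℕ), hrd⟩ := by
          unfold st1; rw [if_pos hp, dif_pos hrd]
        rw [hv, if_pos hrd]
        rw [show x ((t:ℕ)/2) ⟨(r:ℕ), hrd⟩ + ((B1 *ᵥ x ((t:ℕ)/2)) ⟨(r:ℕ), hrD⟩
            - x ((t:ℕ)/2) ⟨(r:ℕ), hrd⟩) = (B1 *ᵥ x ((t:ℕ)/2)) ⟨(r:ℕ), hrD⟩ from by ring]
        exact lrelu_eq ρ _ hρ
      · have hv : st1 Dhid d D N x y t r = 0 := by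
          unfold st1; rw [if_pos hp, dif_neg hrd]
          by_cases hre : (r:ℕ) = d
          · rw [if_pos hre]
          · rw [if_neg hre]; exact posX_lo _ _ (by omega)
        rw [hv, if_neg hrd]
        rw [show (0:ℝ) + ((B1 *ᵥ x ((t:ℕ)/2)) ⟨(r:ℕ), hrD⟩ - 0)
            = (B1 *ᵥ x ((t:ℕ)/2)) ⟨(r:ℕ), hrD⟩ from by ring]
        exact lrelu_eq ρ _ hρ
    · rw [dif_neg hrD, if_neg hrD]
      by_cases hrd : (r:ℕ) < d
      · have hv : st1 Dhid d D N x y t r = x ((t:ℕ)/2) ⟨(r:ℕ), hrd⟩ := by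
          unfold st1; rw [if_pos hp, dif_pos hrd]
        rw [hv, if_pos hrd]
        rw [show x ((t:ℕ)/2) ⟨(r:ℕ), hrd⟩ + (0 - x ((t:ℕ)/2) ⟨(r:ℕ), hrd⟩) + 0
            = 0 from by ring]
        unfold supFormat
        rw [dif_neg hrD]
        by_cases hre : (r:ℕ) = D
        · rw [if_pos hre, if_pos hp]
        · rw [if_neg hre, if_pos hp]; exact (posX_lo _ _ (by omega)).symm
      · rw [if_neg hrd]
        rw [show st1 Dhid d D N x y t r + (0 - 0) + 0
            = st1 Dhid d D N x y t r from by ring]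
        unfold st1 supFormat
        rw [if_pos hp, if_pos hp, dif_neg hrd, dif_neg hrD]
        by_cases hre : (r:ℕ) = d
        · rw [if_pos hre]
          by_cases hrE : (r:ℕ) = D
          · rw [if_pos hrE]
          · rw [if_neg hrE, if_pos hp]; exact (posX_lo _ _ (by omega)).symm
        · rw [if_neg hre]
          by_cases hrE : (r:ℕ) = D
          · rw [if_pos hrE]; exact posX_lo _ _ (by omega)
          · rw [if_neg hrE, if_pos hp]
  · rw [if_neg hp]
    simp only [Pi.add_apply, Pi.zero_apply, add_zero]
    by_cases hrD : (r:ℕ) < D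
    · rw [if_pos hrD]
      have hv : st1 Dhid d D N x y t r = 0 := by
        unfold st1; rw [if_neg hp, if_neg (show ¬(r:ℕ) = D by omega)]
        by_cases hre : (r:ℕ) ≤ d
        · rw [if_pos hre]
        · rw [if_neg hre]; exact posY_lo _ _ (by omega)
      have hR : supFormat Dhid D N (fun i => lreluV ρ (B1 *ᵥ x i)) (fun _ _ => 0) y t r = 0 := by
        unfold supFormat; rw [dif_pos hrD, if_neg hp]
      rw [hv, hR]
      simp [relu]
    · rw [if_neg hrD, add_zero]
      unfold st1 supFormat
      rw [if_neg hp, dif_neg hrD]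
      by_cases hrE : (r:ℕ) = D
      · rw [if_pos hrE, if_pos hrE, if_neg hp]
      · rw [if_neg hrE, if_neg hrE, if_neg hp]
        by_cases hre : (r:ℕ) ≤ d
        · rw [if_pos hre]; exact (posY_lo _ _ (by omega)).symm
        · rw [if_neg hre]

end TFM4

namespace TFM5
open TFM TFM2 TFM3 TFM4

lemma tfApply_cons {Dhid M : ℕ} (a : TFLayer Dhid) (l : List (TFLayer Dhid))
    (H : Fin M → Fin Dhid → ℝ) :
    tfApply (a :: l) H = tfApply l (TFLayer.apply a H) := rfl

lemma fold_lem {Dhid D N : ℕ} (ρ : ℝ) (hρ : ρ ≤ 1) (h : D+10 ≤ Dhid) (y : ℕ → ℝ) :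
    ∀ (Bs : List (Matrix (Fin D) (Fin D) ℝ)) (u : ℕ → Fin D → ℝ),
    tfApply (Bs.map (layerB Dhid ρ)) (supFormat Dhid D N u (fun _ _ => 0) y)
      = supFormat Dhid D N (fun i => Bs.foldl (fun v B => lreluV ρ (B *ᵥ v)) (u i))
          (fun _ _ => 0) y := by
  intro Bs
  induction Bs with
  | nil => intro u; rfl
  | cons B Bs ih =>
    intro u
    rw [List.map_cons, tfApply_cons, stageB ρ hρ B u y h]
    exact ih (fun i => lreluV ρ (B *ᵥ u i))

theorem main (d D Dhid : ℕ) (ρ : ℝ)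
    (hρ0 : 0 < ρ) (hρ1 : ρ < 1)
    (B1 : Matrix (Fin D) (Fin d) ℝ) (Bs : List (Matrix (Fin D) (Fin D) ℝ))
    (hDhid : max (2 * D) (D + d + 10) ≤ Dhid) :
    ∃ layers : List (TFLayer Dhid),
      layers.length = Bs.length + 2 ∧
      (∀ l ∈ layers, l.Mh ≤ 5) ∧
      ∀ (N : ℕ) (x : ℕ → Fin d → ℝ) (y : ℕ → ℝ),
        tfApply layers (supInput Dhid d N x y)
          = supFormat Dhid D N (fun i => mlpRep ρ B1 Bs (x i)) (fun _ _ => 0) y := by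
  have h : D + d + 10 ≤ Dhid := le_trans (le_max_right _ _) hDhid
  refine ⟨layer0 Dhid d D :: layer1 Dhid ρ B1 :: Bs.map (layerB Dhid ρ), by simp, ?_, ?_⟩
  · intro l hl
    simp only [List.mem_cons, List.mem_map] at hl
    rcases hl with rfl | rfl | ⟨B, -, rfl⟩
    · exact (by norm_num : (1:ℕ) ≤ 5)
    · exact (by norm_num : (1:ℕ) ≤ 5)
    · exact (by norm_num : (1:ℕ) ≤ 5)
  · intro N x y
    rw [tfApply_cons, tfApply_cons, stage0 x y (by omega) (by omega),
      stage1 ρ (le_of_lt hρ1) B1 x y h,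
      fold_lem ρ (le_of_lt hρ1) (by omega) y Bs (fun i => lreluV ρ (B1 *ᵥ x i))]
    rfl

end TFM5

/-- **Implementing the MLP representation by a transformer (Lemma `mlp`).**
Let `Φ*` be the `L`-layer leaky-ReLU MLP representation with matrices
`B₁ ∈ ℝ^{D×d}` and `B₂, …, B_L ∈ ℝ^{D×D}` (here `L = Bs.length + 1`), and
suppose `D_hid ≥ max{2D, D + d + 10}`.  Then there is an `(L+1)`-layer decoder
transformer with at most `5` heads per attention layer that implements `Φ*`
token-wise: on every supervised-format input it outputs columns
`[Φ*(x_i); 0; p̃^x_i]` and `[0_D; y_i; p̃^y_i]`. -/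
theorem transformer_implements_mlp_representation (d D Dhid : ℕ) (ρ : ℝ)
    (hρ0 : 0 < ρ) (hρ1 : ρ < 1)
    (B1 : Matrix (Fin D) (Fin d) ℝ) (Bs : List (Matrix (Fin D) (Fin D) ℝ))
    (hDhid : max (2 * D) (D + d + 10) ≤ Dhid) :
    ∃ layers : List (TFLayer Dhid),
      layers.length = Bs.length + 2 ∧
      (∀ l ∈ layers, l.Mh ≤ 5) ∧
      ∀ (N : ℕ) (x : ℕ → Fin d → ℝ) (y : ℕ → ℝ),
        tfApply layers (supInput Dhid d N x y)
          = supFormat Dhid D N (fun i => mlpRep ρ B1 Bs (x i)) (fun _ _ => 0) y :=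
  TFM5.main d D Dhid ρ hρ0 hρ1 B1 Bs hDhid

end
end

section
/- Fix an integer i ≥ 2, vectors x_1, …, x_i ∈ ℝ^d with ‖x_j‖₂ ≤ B_x, reals y_1, …, y_{i−1} with |y_j| ≤ B_y, and w ∈ ℝ^d with ‖w‖₂ ≤ B_w, and set R = max(B_x B_w, B_y). Then Σ_{j=1}^{i−1} [σ(⟨w, x_j⟩/2 − y_j + R(3i − 3j − 1)) − σ(R(3i − 3j − 1))]·x_j + Σ_{j=1}^{i} [σ(⟨w, x_j⟩/2 + R(3i − 3j − 1)) − σ(R(3i − 3j − 1))]·x_j = Σ_{j=1}^{i−1} (⟨w, x_j⟩ − y_j)·x_j, where σ(t) = max(t, 0). In particular, the left-hand side equals (i−1)·∇L̂_{i−1}(w), the scaled gradient of the unregularized least-squares risk L̂_{i−1}(w) = (1/(2(i−1))) Σ_{j=1}^{i−1} (⟨w, x_j⟩ − y_j)². -/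
open scoped Matrix

noncomputable section

lemma abs_dotProduct_le {n : ℕ} (v u : Fin n → ℝ) :
    |v ⬝ᵥ u| ≤ l2norm v * l2norm u := by
  have h := Real.sum_mul_le_sqrt_mul_sqrt Finset.univ (fun k => |v k|) (fun k => |u k|)
  simp only [sq_abs] at h
  calc |v ⬝ᵥ u| ≤ ∑ k, |v k * u k| := by
        exact Finset.abs_sum_le_sum_abs _ _
    _ = ∑ k, |v k| * |u k| := by simp [abs_mul]
    _ ≤ l2norm v * l2norm u := h

/-- **The in-context gradient-descent identity (key step of
Proposition `one-step-gd`).**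
Fix `i ≥ 2`, vectors `x_1, …, x_i` with `‖x_j‖₂ ≤ B_x`, reals
`y_1, …, y_{i-1}` with `|y_j| ≤ B_y`, `w` with `‖w‖₂ ≤ B_w`, and set
`R = max(B_x B_w, B_y)`.  Then the differences of ReLU attention scores with
offsets `R(3i - 3j - 1)` exactly reproduce the scaled least-squares gradient
`Σ_{j=1}^{i-1} (⟨w, x_j⟩ - y_j) x_j = (i-1)∇L̂_{i-1}(w)`. -/
theorem incontext_gd_relu_identity (d : ℕ) (i : ℕ) (hi : 2 ≤ i)
    (Bx By Bw : ℝ) (x : ℕ → Fin d → ℝ) (y : ℕ → ℝ) (w : Fin d → ℝ)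
    (hx : ∀ j ∈ Finset.Icc 1 i, l2norm (x j) ≤ Bx)
    (hy : ∀ j ∈ Finset.Icc 1 (i-1), |y j| ≤ By)
    (hw : l2norm w ≤ Bw)
    (R : ℝ) (hR : R = max (Bx * Bw) By) :
    (∑ j ∈ Finset.Icc 1 (i-1),
        (relu (w ⬝ᵥ x j / 2 - y j + R * (3*(i:ℝ) - 3*(j:ℝ) - 1))
          - relu (R * (3*(i:ℝ) - 3*(j:ℝ) - 1))) • x j)
      + (∑ j ∈ Finset.Icc 1 i,
        (relu (w ⬝ᵥ x j / 2 + R * (3*(i:ℝ) - 3*(j:ℝ) - 1))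
          - relu (R * (3*(i:ℝ) - 3*(j:ℝ) - 1))) • x j)
      = ∑ j ∈ Finset.Icc 1 (i-1), (w ⬝ᵥ x j - y j) • x j := by
  have h1i : (1:ℕ) ∈ Finset.Icc 1 i := by
    simp [Finset.mem_Icc]; omega
  have hw0 : 0 ≤ l2norm w := Real.sqrt_nonneg _
  have hx0 : 0 ≤ l2norm (x 1) := Real.sqrt_nonneg _
  have hBw0 : 0 ≤ Bw := le_trans hw0 hw
  have hBx0 : 0 ≤ Bx := le_trans hx0 (hx 1 h1i)
  have hR0 : 0 ≤ R := by
    rw [hR]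
    exact le_max_of_le_left (mul_nonneg hBx0 hBw0)
  -- Cauchy-Schwarz bound
  have hCS : ∀ j ∈ Finset.Icc 1 i, |w ⬝ᵥ x j| ≤ R := by
    intro j hj
    calc |w ⬝ᵥ x j| ≤ l2norm w * l2norm (x j) := abs_dotProduct_le _ _
      _ ≤ Bx * Bw := by
          rw [mul_comm]
          exact mul_le_mul (hx j hj) hw hw0 hBx0
      _ ≤ R := hR ▸ le_max_left _ _
  have hyR : ∀ j ∈ Finset.Icc 1 (i-1), |y j| ≤ R := by
    intro j hj
    exact le_trans (hy j hj) (hR ▸ le_max_right _ _)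
  -- split the second sum
  have hsplit : Finset.Icc 1 i = insert i (Finset.Icc 1 (i-1)) := by
    ext k
    simp only [Finset.mem_insert, Finset.mem_Icc]
    omega
  have hnotmem : i ∉ Finset.Icc 1 (i-1) := by
    simp [Finset.mem_Icc]; omega
  rw [hsplit, Finset.sum_insert hnotmem]
  -- the j = i term vanishes
  have hterm_i : (relu (w ⬝ᵥ x i / 2 + R * (3*(i:ℝ) - 3*(i:ℝ) - 1))
      - relu (R * (3*(i:ℝ) - 3*(i:ℝ) - 1))) • x i = 0 := by
    have hwi := hCS i (by simp [Finset.mem_Icc]; omega)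
    have h1 : w ⬝ᵥ x i / 2 + R * (3*(i:ℝ) - 3*(i:ℝ) - 1) ≤ 0 := by
      have := abs_le.mp hwi
      nlinarith [this.1, this.2]
    have h2 : R * (3*(i:ℝ) - 3*(i:ℝ) - 1) ≤ 0 := by nlinarith
    rw [relu, relu, max_eq_right h1, max_eq_right h2, sub_zero, zero_smul]
  rw [hterm_i, zero_add, ← Finset.sum_add_distrib]
  apply Finset.sum_congr rfl
  intro j hj
  have hji : j ∈ Finset.Icc 1 i := by
    simp only [Finset.mem_Icc] at hj ⊢; omega
  have hwj := abs_le.mp (hCS j hji)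
  have hyj := abs_le.mp (hyR j hj)
  have hjlt : (j:ℝ) ≤ (i:ℝ) - 1 := by
    simp only [Finset.mem_Icc] at hj
    have h2 : (j:ℝ) ≤ ((i-1 : ℕ) : ℝ) := by exact_mod_cast hj.2
    have h3 : ((i-1:ℕ):ℝ) = (i:ℝ) - 1 := by
      have h4 : (1:ℕ) ≤ i := by omega
      push_cast [Nat.cast_sub h4]
      ring
    linarith
  have hoff : 2 * R ≤ R * (3*(i:ℝ) - 3*(j:ℝ) - 1) := by nlinarith
  have ha : 0 ≤ w ⬝ᵥ x j / 2 - y j + R * (3*(i:ℝ) - 3*(j:ℝ) - 1) := by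
    nlinarith [hwj.1, hyj.2]
  have hb : 0 ≤ w ⬝ᵥ x j / 2 + R * (3*(i:ℝ) - 3*(j:ℝ) - 1) := by
    nlinarith [hwj.1]
  have ht : 0 ≤ R * (3*(i:ℝ) - 3*(j:ℝ) - 1) := by linarith
  rw [relu, relu, relu, max_eq_left ha, max_eq_left hb, max_eq_left ht, ← add_smul]
  congr 1
  ring
end
end
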